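/- arXiv:2602.21859 — 7 statements merged into one kernel-verified Lean document; each statement's English description precedes it below -/
import Mathlib

section
/- Let G be a graph and let P = (v_1, ..., v_r) be a longest path in G. Then no connected component D of G − V(P) is adjacent to two consecutive vertices v_i, v_{i+1} of P. -/
/-- `G` contains a path on `r` vertices, witnessed by an injective `f : Fin r → V`
with consecutive vertices adjacent. -/
def IsPathEmb {V : Type*} (G : SimpleGraph V) (r : ℕ) (f : Fin r → V) : Prop :=
  Function.Injective f ∧
    ∀ (i : ℕ) (hi : i + 1 < r), G.Adj (f ⟨i, Nat.lt_of_succ_lt hi⟩) (f ⟨i + 1, hi⟩)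

/-- `G` contains the path `P_r` on `r` vertices as a subgraph. -/
def ContainsPathOn {V : Type*} (G : SimpleGraph V) (r : ℕ) : Prop :=
  ∃ f : Fin r → V, IsPathEmb G r f

lemma isPathEmb_of_list {V : Type*} (G : SimpleGraph V) (L : List V)
    (hnd : L.Nodup) (hch : List.Chain' G.Adj L) : IsPathEmb G L.length L.get := by
  refine ⟨List.nodup_iff_injective_get.mp hnd, ?_⟩
  intro i hi
  have := List.isChain_iff_getElem.mp hch i (by omega)
  exact this

lemma isPathEmb_restrict {V : Type*} {G : SimpleGraph V} {n m : ℕ} {g : Fin n → V}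
    (h : IsPathEmb G n g) (hmn : m ≤ n) : IsPathEmb G m (g ∘ Fin.castLE hmn) := by
  refine ⟨h.1.comp (Fin.castLE_injective hmn), ?_⟩
  intro i hi
  have := h.2 i (lt_of_lt_of_le hi hmn)
  simpa [Fin.castLE] using this

lemma chain'_ofFn {V : Type*} {G : SimpleGraph V} {r : ℕ} {f : Fin r → V}
    (h : IsPathEmb G r f) : List.Chain' G.Adj (List.ofFn f) := by
  rw [List.Chain', List.isChain_iff_getElem]
  intro i hi
  simp only [List.length_ofFn] at hi
  simp only [List.getElem_ofFn]
  have := h.2 i (by omega)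
  convert this using 2


/-- If `P = (v_1, …, v_r)` is a longest path in `G` (no path on `r+1` vertices exists),
then no connected component of `G − V(P)` is adjacent to two consecutive vertices of `P`:
if `a` and `b` lie in the same component of `G − V(P)`, they cannot be adjacent to `v_i`
and `v_{i+1}` respectively. -/
theorem stmt1 {V : Type*} (G : SimpleGraph V) (r : ℕ) (f : Fin r → V)
    (hP : IsPathEmb G r f) (hlong : ¬ ContainsPathOn G (r + 1))
    (S : Set V) (hS : S = (Set.range f)ᶜ)
    (a b : S) (hab : (G.induce S).Reachable a b)
    (i : ℕ) (hi : i + 1 < r) :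
    ¬ (G.Adj (a : V) (f ⟨i, Nat.lt_of_succ_lt hi⟩) ∧ G.Adj (b : V) (f ⟨i + 1, hi⟩)) := by
  classical
  rintro ⟨ha, hb⟩
  apply hlong
  obtain ⟨w⟩ := hab
  set p : SimpleGraph.Path (G.induce S) a b := w.toPath with hp
  set L1 : List V := (List.ofFn f).take (i+1) with hL1
  set L2 : List V := p.val.support.map Subtype.val with hL2
  set L3 : List V := (List.ofFn f).drop (i+1) with hL3
  set L : List V := L1 ++ (L2 ++ L3) with hL
  -- membership facts
  have hmem2 : ∀ x ∈ L2, x ∈ S := by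
    rintro x hx
    obtain ⟨⟨y, hy⟩, -, rfl⟩ := List.mem_map.mp hx
    exact hy
  have hmem1 : ∀ x ∈ L1, x ∈ Set.range f := by
    intro x hx
    have := List.mem_of_mem_take hx
    simpa using List.mem_ofFn.mp (by simpa using this)
  have hmem3 : ∀ x ∈ L3, x ∈ Set.range f := by
    intro x hx
    have := List.mem_of_mem_drop hx
    simpa using List.mem_ofFn.mp (by simpa using this)
  have hndF : (List.ofFn f).Nodup := by
    rw [List.nodup_ofFn]; exact hP.1
  have h13 : L1 ++ L3 = List.ofFn f := List.take_append_drop _ _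
  have hnd13 := h13 ▸ hndF
  rw [List.nodup_append] at hnd13
  -- nodup of L
  have hndL : L.Nodup := by
    rw [hL, List.nodup_append, List.nodup_append]
    refine ⟨hnd13.1, ⟨?_, hnd13.2.1, ?_⟩, ?_⟩
    · rw [hL2]
      exact p.prop.support_nodup.map Subtype.val_injective
    · intro x hx2 y hx3 hxy; subst hxy
      have := hmem2 x hx2
      rw [hS] at this
      exact this (hmem3 x hx3)
    · intro x hx1 y hx hxy; subst hxy
      rcases List.mem_append.mp hx with hx2 | hx3
      · have := hmem2 x hx2
        rw [hS] at this
        exact this (hmem1 x hx1)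
      · exact hnd13.2.2 x hx1 x hx3 rfl
  -- lengths
  have hlen1 : L1.length = i + 1 := by
    simp [hL1, List.length_take]; omega
  have hlen2 : 1 ≤ L2.length := by
    simp [hL2, SimpleGraph.Walk.length_support]
  have hlen3 : L3.length = r - (i+1) := by simp [hL3]
  have hlenL : L.length = r + L2.length := by
    simp [hL]; omega
  -- junction facts
  have hlast1 : L1.getLast? = some (f ⟨i, Nat.lt_of_succ_lt hi⟩) := by
    rw [List.getLast?_eq_getElem?, hlen1]
    simp only [Nat.add_sub_cancel, hL1, List.getElem?_take]
    rw [if_pos (Nat.lt_succ_self i)]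
    rw [List.getElem?_eq_getElem (by simpa using Nat.lt_of_succ_lt hi)]
    simp [List.getElem_ofFn]
  have hhead2 : L2.head? = some (a : V) := by
    rw [hL2, List.head?_map]
    rw [p.val.support_eq_cons]
    rfl
  have hlast2 : L2.getLast? = some (b : V) := by
    rw [List.getLast?_eq_head?_reverse, hL2, ← List.map_reverse,
      ← SimpleGraph.Walk.support_reverse, List.head?_map,
      (p.val.reverse).support_eq_cons]
    rfl
  have hhead3 : L3.head? = some (f ⟨i + 1, hi⟩) := by
    rw [hL3, List.head?_drop]
    rw [List.getElem?_eq_getElem (by simpa using hi)]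
    simp [List.getElem_ofFn]
  -- chain
  have hchF := chain'_ofFn hP
  have hch1 : List.Chain' G.Adj L1 := hchF.prefix (h13 ▸ List.prefix_append _ _)
  have hch3 : List.Chain' G.Adj L3 := hchF.suffix (h13 ▸ List.suffix_append _ _)
  have hch2 : List.Chain' G.Adj L2 := by
    rw [hL2]
    exact List.isChain_map_of_isChain Subtype.val (fun x y h => h) p.val.isChain_adj_support
  have hchL : List.Chain' G.Adj L := by
    rw [hL, List.Chain', List.isChain_append, List.isChain_append]
    refine ⟨hch1, ⟨hch2, hch3, ?_⟩, ?_⟩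
    · intro x hx y hy
      rw [hlast2] at hx; rw [hhead3] at hy
      cases hx; cases hy
      exact hb
    · intro x hx y hy
      rw [hlast1] at hx
      cases hx
      rw [List.head?_append, hhead2] at hy
      cases hy
      exact ha.symm
  -- conclude
  have hemb := isPathEmb_of_list G L hndL hchL
  exact ⟨_, isPathEmb_restrict hemb (by omega)⟩
end

section
/- Let (G,T,k) be an instance of Steiner Forest, and let x, y be two vertices of G with N(x) strictly contained in N(y), where x does not occur in any terminal pair of T. Then (G,T,k) is a yes-instance if and only if (G − x, T, k) is a yes-instance. -/
/-- `(G, T, k)` is a yes-instance of Steiner Forest: there is a subgraph `F` of `G`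
with at most `k` edges such that every terminal pair of `T` lies in one component of `F`. -/
def SFYes {V : Type*} (G : SimpleGraph V) (T : Set (V × V)) (k : ℕ) : Prop :=
  ∃ F : SimpleGraph V, F ≤ G ∧ F.edgeSet.Finite ∧ F.edgeSet.ncard ≤ k ∧
    ∀ p ∈ T, F.Reachable p.1 p.2

private def subEmb {V : Type*} (x : V) : {v : V | v ≠ x} ↪ V :=
  ⟨Subtype.val, Subtype.val_injective⟩

private def mapHom {V : Type*} (x : V) (F' : SimpleGraph {v : V | v ≠ x}) :
    F' →g F'.map (subEmb x) :=
  ⟨subEmb x, fun hab => ⟨fun h => hab.ne (Subtype.ext h), _, _, hab, rfl, rfl⟩⟩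

/-- If `N(x) ⊊ N(y)` and `x` occurs in no terminal pair, then `(G,T,k)` is a yes-instance
iff `(G − x, T, k)` is a yes-instance. -/
theorem stmt3 {V : Type*} (G : SimpleGraph V) (T : Set (V × V)) (k : ℕ)
    (x y : V) (hxy : G.neighborSet x ⊂ G.neighborSet y)
    (hx : ∀ p ∈ T, p.1 ≠ x ∧ p.2 ≠ x) :
    SFYes G T k ↔
      SFYes (G.induce {v : V | v ≠ x})
        {p : {v : V // v ≠ x} × {v : V // v ≠ x} | ((p.1 : V), (p.2 : V)) ∈ T} k := by
  classical
  have hne : x ≠ y := by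
    intro h
    subst h
    exact ssubset_irrefl _ hxy
  have hsub : ∀ z, G.Adj x z → G.Adj y z := fun z hz => hxy.subset hz
  constructor
  · rintro ⟨F, hFG, hfin, hcard, hreach⟩
    set g : V → V := fun v => if v = x then y else v with hg_def
    have hg : ∀ v, g v ≠ x := by
      intro v
      by_cases h : v = x
      · simp [hg_def, h, hne.symm]
      · simp [hg_def, h]
    set g' : V → {v : V | v ≠ x} := fun v => ⟨g v, hg v⟩ with hg'_def
    have hgfix : ∀ v : V, v ≠ x → g v = v := by
      intro v hv; simp [hg_def, hv]
    have hgx : g x = y := by simp [hg_def]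
    have hfixed : ∀ c : {v : V | v ≠ x}, g' (c : V) = c :=
      fun c => Subtype.ext (hgfix _ c.2)
    set F' : SimpleGraph {v : V | v ≠ x} :=
      { Adj := fun a b => (a : V) ≠ (b : V) ∧
          (F.Adj a b ∨ ((a : V) = y ∧ F.Adj x b) ∨ ((b : V) = y ∧ F.Adj a x)),
        symm := by
          constructor; rintro a b ⟨hab, h⟩
          refine ⟨hab.symm, ?_⟩
          rcases h with h | ⟨h1, h2⟩ | ⟨h1, h2⟩
          · exact Or.inl h.symm
          · exact Or.inr (Or.inr ⟨h1, h2.symm⟩)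
          · exact Or.inr (Or.inl ⟨h1, h2.symm⟩)
        loopless := by
          constructor; rintro a ⟨hab, _⟩
          exact hab rfl } with hF'_def
    have hedges : F'.edgeSet ⊆ Sym2.map g' '' F.edgeSet := by
      intro e he
      induction e using Sym2.ind with
      | _ a b =>
        obtain ⟨hab, h⟩ := he
        rcases h with h | ⟨h1, h2⟩ | ⟨h1, h2⟩
        · exact ⟨s((a : V), (b : V)), h, by
            simp only [Sym2.map_pair_eq, hfixed]⟩
        · have h3 : g' x = a := Subtype.ext (hgx.trans h1.symm)
          exact ⟨s(x, (b : V)), h2, by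
            simp only [Sym2.map_pair_eq, hfixed, h3]⟩
        · have h3 : g' x = b := Subtype.ext (hgx.trans h1.symm)
          exact ⟨s((a : V), x), h2, by
            simp only [Sym2.map_pair_eq, hfixed, h3]⟩
    have key : ∀ (u v : V), F.Walk u v → F'.Reachable (g' u) (g' v) := by
      intro u v w
      induction w with
      | nil => exact SimpleGraph.Reachable.refl _
      | @cons a b c h p ih =>
        refine SimpleGraph.Reachable.trans ?_ ih
        by_cases hcol : g' a = g' b
        · rw [hcol]
        · apply SimpleGraph.Adj.reachable
          show g a ≠ g b ∧ (F.Adj (g a) (g b) ∨ (g a = y ∧ F.Adj x (g b)) ∨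
            (g b = y ∧ F.Adj (g a) x))
          refine ⟨fun hh => hcol (Subtype.ext hh), ?_⟩
          by_cases hu : a = x
          · have hv : b ≠ x := fun hbx => h.ne (hu.trans hbx.symm)
            rw [hu, hgx, hgfix b hv]
            exact Or.inr (Or.inl ⟨rfl, hu ▸ h⟩)
          · by_cases hv : b = x
            · rw [hv, hgx, hgfix a hu]
              exact Or.inr (Or.inr ⟨rfl, hv ▸ h⟩)
            · rw [hgfix a hu, hgfix b hv]
              exact Or.inl h
    refine ⟨F', ?_, (hfin.image _).subset hedges,
      le_trans (Set.ncard_le_ncard hedges (hfin.image _))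
        (le_trans (Set.ncard_image_le hfin) hcard), ?_⟩
    · rintro a b ⟨hab, h⟩
      show G.Adj (a : V) (b : V)
      rcases h with h | ⟨h1, h2⟩ | ⟨h1, h2⟩
      · exact hFG h
      · rw [h1]; exact hsub _ (hFG h2)
      · rw [h1]; exact (hsub _ (hFG h2.symm)).symm
    · intro p hp
      obtain ⟨w⟩ := hreach ((p.1 : V), (p.2 : V)) hp
      have := key _ _ w
      rwa [hfixed p.1, hfixed p.2] at this
  · rintro ⟨F', hF'G, hfin, hcard, hreach⟩
    have hhom := mapHom x F'
    have hmap : (F'.map (subEmb x)).edgeSet = Sym2.map (subEmb x) '' F'.edgeSet := by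
      apply Set.Subset.antisymm
      · intro e he
        induction e using Sym2.ind with
        | _ u v =>
          obtain ⟨-, a, b, hab, ha, hb⟩ := he
          exact ⟨s(a, b), hab, by rw [Sym2.map_pair_eq, ha, hb]⟩
      · rintro e ⟨e', he', rfl⟩
        revert he'
        induction e' using Sym2.ind with
        | _ a b =>
          intro he'
          rw [Sym2.map_pair_eq]
          exact ⟨fun h => (F'.mem_edgeSet.mp he').ne (Subtype.ext h), a, b, he', rfl, rfl⟩
    refine ⟨F'.map (subEmb x), ?_, ?_, ?_, ?_⟩
    · rintro u v ⟨-, a, b, hab, rfl, rfl⟩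
      exact hF'G hab
    · rw [hmap]
      exact hfin.image _
    · rw [hmap]
      calc _ = F'.edgeSet.ncard := Set.ncard_image_of_injective _ (Sym2.map.injective (subEmb x).injective)
        _ ≤ k := hcard
    · intro p hp
      obtain ⟨h1, h2⟩ := hx p hp
      have hr := hreach (⟨p.1, h1⟩, ⟨p.2, h2⟩) hp
      have h3 : mapHom x F' ⟨p.1, h1⟩ = p.1 := rfl
      have h4 : mapHom x F' ⟨p.2, h2⟩ = p.2 := rfl
      have h5 := hr.map (mapHom x F')
      rw [h3, h4] at h5
      exact h5
end

section
/- Let (G,T,k) be an instance of Steiner Forest and let xy be an edge of G such that (x,y) is a terminal pair in T. Let G' be the graph obtained from G by identifying x and y (contracting the edge xy), and let T' be obtained from T by removing the pair (x,y) and replacing every occurrence of x or y in the remaining pairs by the new identified vertex. Then (G,T,k) is a yes-instance if and only if (G',T',k−1) is a yes-instance. -/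
/-- The graph obtained from `G` by identifying `x` and `y` (contracting towards `x`):
the vertex `y` is removed, and `x` inherits all neighbours of `y`. -/
def contractGraph {V : Type*} (G : SimpleGraph V) (x y : V) :
    SimpleGraph {v : V // v ≠ y} where
  Adj a b := (a : V) ≠ (b : V) ∧
    (G.Adj a b ∨ ((a : V) = x ∧ G.Adj y b) ∨ ((b : V) = x ∧ G.Adj (a : V) y))
  symm := by
    constructor
    rintro a b ⟨hne, h⟩
    refine ⟨hne.symm, ?_⟩
    rcases h with h | h | h
    · exact Or.inl h.symm
    · exact Or.inr (Or.inr ⟨h.1, h.2.symm⟩)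
    · exact Or.inr (Or.inl ⟨h.1, h.2.symm⟩)
  loopless := ⟨fun a h => h.1 rfl⟩

namespace SFAux

variable {V : Type*}

/-- Lift reachability along a map between graphs sending edges to reachable pairs. -/
lemma reachLift {α β : Type*} {A : SimpleGraph α} {B : SimpleGraph β} (f : α → β)
    (h : ∀ u v, A.Adj u v → B.Reachable (f u) (f v)) {u v : α} (hr : A.Reachable u v) :
    B.Reachable (f u) (f v) := by
  obtain ⟨w⟩ := hr
  induction w with
  | nil => exact SimpleGraph.Reachable.refl _
  | cons ha _ ih => exact (h _ _ ha).trans ih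

lemma ncard_diff_singleton_add_one {α : Type*} {s : Set α} {a : α} (ha : a ∈ s)
    (hs : s.Finite) : (s \ {a}).ncard + 1 = s.ncard := by
  have h2 : a ∉ s \ {a} := fun h => h.2 rfl
  calc (s \ {a}).ncard + 1 = (insert a (s \ {a})).ncard :=
        (Set.ncard_insert_of_notMem h2 (hs.diff)).symm
    _ = s.ncard := by rw [Set.insert_diff_singleton, Set.insert_eq_of_mem ha]

open Classical in
/-- The projection sending `y` to `x` and everything else to itself. -/
noncomputable def pif (x y : V) (hxy : x ≠ y) : V → {v : V // v ≠ y} :=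
  fun v => if h : v = y then ⟨x, hxy⟩ else ⟨v, h⟩

lemma pif_of_ne {x y v : V} (hxy : x ≠ y) (h : v ≠ y) : pif x y hxy v = ⟨v, h⟩ := by
  unfold pif
  exact dif_neg h

lemma pif_y {x y : V} (hxy : x ≠ y) : pif x y hxy y = ⟨x, hxy⟩ := by
  unfold pif
  exact dif_pos rfl

lemma pif_val {x y : V} (hxy : x ≠ y) (b : {v : V // v ≠ y}) :
    pif x y hxy (b : V) = b := Subtype.ext (by rw [pif_of_ne hxy b.2])

open Classical in
lemma pif_coe {x y : V} (hxy : x ≠ y) (v : V) :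
    ((pif x y hxy v : {v : V // v ≠ y}) : V) = if v = y then x else v := by
  by_cases h : v = y
  · subst h
    rw [pif_y hxy, if_pos rfl]
  · rw [pif_of_ne hxy h, if_neg h]

/-- `F` with the edge `xu` removed and the edge `xy` added. -/
def addRemove (F : SimpleGraph V) (x y u : V) (hxy : x ≠ y) : SimpleGraph V where
  Adj a b := s(a, b) = s(x, y) ∨ (F.Adj a b ∧ s(a, b) ≠ s(x, u))
  symm := by
    constructor
    rintro a b (h | ⟨h1, h2⟩)
    · exact Or.inl (by rwa [Sym2.eq_swap])
    · exact Or.inr ⟨h1.symm, by rwa [Sym2.eq_swap]⟩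
  loopless := by
    constructor
    rintro a (h | ⟨h1, _⟩)
    · rw [Sym2.eq_iff] at h
      rcases h with ⟨h1, h2⟩ | ⟨h1, h2⟩ <;> exact hxy (h1 ▸ h2 ▸ rfl)
    · exact F.loopless.irrefl a h1

open Classical in
/-- Choice of a `G`-edge representing an edge of the contraction, preferring `x` over `y`. -/
noncomputable def liftEdge (G : SimpleGraph V) (x y : V) : {v : V // v ≠ y} → {v : V // v ≠ y} → Sym2 V :=
  fun a b =>
    if (a : V) = x ∧ ¬G.Adj x b then s(y, (b : V))
    else if (b : V) = x ∧ ¬G.Adj x a then s((a : V), y)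
    else s((a : V), (b : V))

open Classical in
lemma liftEdge_symm (G : SimpleGraph V) (x y : V) (a b : {v : V // v ≠ y}) :
    liftEdge G x y a b = liftEdge G x y b a := by
  unfold liftEdge
  by_cases hA : (a : V) = x ∧ ¬G.Adj x b <;> by_cases hB : (b : V) = x ∧ ¬G.Adj x a
  · have hab : a = b := Subtype.ext (hA.1.trans hB.1.symm)
    subst hab
    rfl
  · rw [if_pos hA, if_neg hB, if_pos hA]
    exact Sym2.eq_swap
  · rw [if_neg hA, if_pos hB, if_pos hB]
    exact Sym2.eq_swap
  · rw [if_neg hA, if_neg hB, if_neg hB, if_neg hA]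
    exact Sym2.eq_swap

end SFAux

open SFAux in
open Classical in
/-- The lift of a subgraph `F'` of the contraction back to `V`: add the edge `xy`, and lift
every edge of `F'` to a `G`-edge, preferring the representative `x` over `y`. -/
def liftGraph {V : Type*} (G : SimpleGraph V) (x y : V) (hxy : x ≠ y)
    (F' : SimpleGraph {v : V // v ≠ y}) : SimpleGraph V where
  Adj a b := s(a, b) = s(x, y)
    ∨ (∃ (ha : a ≠ y) (hb : b ≠ y), F'.Adj ⟨a, ha⟩ ⟨b, hb⟩ ∧ G.Adj a b)
    ∨ (a = y ∧ ∃ (hb : b ≠ y), F'.Adj ⟨x, hxy⟩ ⟨b, hb⟩ ∧ ¬G.Adj x b)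
    ∨ (b = y ∧ ∃ (ha : a ≠ y), F'.Adj ⟨x, hxy⟩ ⟨a, ha⟩ ∧ ¬G.Adj x a)
  symm := by
    constructor
    rintro a b (h | ⟨ha, hb, h1, h2⟩ | ⟨rfl, hb, h1, h2⟩ | ⟨rfl, ha, h1, h2⟩)
    · exact Or.inl (by rwa [Sym2.eq_swap])
    · exact Or.inr (Or.inl ⟨hb, ha, h1.symm, h2.symm⟩)
    · exact Or.inr (Or.inr (Or.inr ⟨rfl, hb, h1, h2⟩))
    · exact Or.inr (Or.inr (Or.inl ⟨rfl, ha, h1, h2⟩))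
  loopless := by
    constructor
    rintro a (h | ⟨ha, hb, h1, _⟩ | ⟨rfl, hb, _, _⟩ | ⟨rfl, ha, _, _⟩)
    · rw [Sym2.eq_iff] at h
      rcases h with ⟨h1, h2⟩ | ⟨h1, h2⟩ <;> exact hxy (h1 ▸ h2 ▸ rfl)
    · exact F'.loopless.irrefl _ h1
    · exact hb rfl
    · exact ha rfl

open SFAux in
open Classical in
/-- If `xy ∈ E(G)` and `(x,y) ∈ T`, then `(G,T,k)` is a yes-instance iff
`(G', T', k−1)` is, where `G'` identifies `x` and `y` and `T'` removes the pair `(x,y)`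
and replaces every occurrence of `x` or `y` by the identified vertex (represented by `x`). -/
theorem stmt4 {V : Type*} (G : SimpleGraph V) (T : Set (V × V)) (k : ℕ) (hk : 1 ≤ k)
    (x y : V) (hadj : G.Adj x y) (hT : (x, y) ∈ T) :
    SFYes G T k ↔
      SFYes (contractGraph G x y)
        {p : {v : V // v ≠ y} × {v : V // v ≠ y} |
          ∃ q ∈ T, q ≠ (x, y) ∧
            (p.1 : V) = (if q.1 = y then x else q.1) ∧
            (p.2 : V) = (if q.2 = y then x else q.2)}
        (k - 1) := by
  have hxy : x ≠ y := hadj.ne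
  constructor
  · rintro ⟨F, hFG, hfin, hcard, hconn⟩
    -- Step 1: obtain a path from x to y in F and replace its first edge by the edge xy.
    obtain ⟨w0⟩ := hconn (x, y) hT
    obtain ⟨w, hp⟩ : ∃ w : F.Walk x y, w.IsPath := ⟨w0.toPath, w0.toPath.2⟩
    cases w with
    | nil => exact absurd hadj (G.loopless.irrefl x)
    | @cons _ u _ h' w' =>
      rw [SimpleGraph.Walk.cons_isPath_iff] at hp
      obtain ⟨hp', hxsup⟩ := hp
      set F₂ : SimpleGraph V := addRemove F x y u hxy with hF₂
      have hadjdef : ∀ a b : V, F₂.Adj a b ↔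
          (s(a, b) = s(x, y) ∨ (F.Adj a b ∧ s(a, b) ≠ s(x, u))) := fun a b => Iff.rfl
      have hF2G : F₂ ≤ G := by
        intro a b hab
        rcases (hadjdef a b).1 hab with h | ⟨h1, _⟩
        · rw [Sym2.eq_iff] at h
          rcases h with ⟨rfl, rfl⟩ | ⟨rfl, rfl⟩
          · exact hadj
          · exact hadj.symm
        · exact hFG h1
      have hxyF2 : F₂.Adj x y := (hadjdef x y).2 (Or.inl rfl)
      have hsub : F₂.edgeSet ⊆ insert s(x, y) (F.edgeSet \ {s(x, u)}) := by
        intro e he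
        induction e using Sym2.ind with
        | _ a b =>
          rcases (hadjdef a b).1 ((SimpleGraph.mem_edgeSet F₂).1 he) with h | ⟨h1, h2⟩
          · exact Set.mem_insert_iff.2 (Or.inl h)
          · exact Set.mem_insert_iff.2 (Or.inr ⟨(SimpleGraph.mem_edgeSet F).2 h1,
              fun hh => h2 hh⟩)
      have hfin2 : F₂.edgeSet.Finite := ((hfin.diff).insert _).subset hsub
      have hcard2 : F₂.edgeSet.ncard ≤ k := by
        have h1 : F₂.edgeSet.ncard ≤ (F.edgeSet \ {s(x, u)}).ncard + 1 :=
          le_trans (Set.ncard_le_ncard hsub ((hfin.diff).insert _))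
            (Set.ncard_insert_le _ _)
        have h2 := ncard_diff_singleton_add_one ((SimpleGraph.mem_edgeSet F).2 h') hfin
        omega
      -- reachability is preserved from F to F₂
      have hux : F₂.Reachable u x := by
        have hw' : ∀ e ∈ w'.edges, e ∈ F₂.edgeSet := by
          intro e he
          have heF : e ∈ F.edgeSet := w'.edges_subset_edgeSet he
          induction e using Sym2.ind with
          | _ a b =>
            refine (SimpleGraph.mem_edgeSet F₂).2 ((hadjdef a b).2
              (Or.inr ⟨(SimpleGraph.mem_edgeSet F).1 heF, ?_⟩))
            intro h
            exact hxsup (w'.fst_mem_support_of_mem_edges (h ▸ he))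
        exact SimpleGraph.Reachable.trans
          (⟨w'.transfer F₂ hw'⟩ : F₂.Reachable u y) hxyF2.symm.reachable
      have hreach2 : ∀ a b : V, F.Reachable a b → F₂.Reachable a b := by
        intro a b hr
        have h := reachLift (A := F) (B := F₂) id ?_ hr
        · exact h
        intro c d hcd
        by_cases h : s(c, d) = s(x, u)
        · rw [Sym2.eq_iff] at h
          rcases h with ⟨rfl, rfl⟩ | ⟨rfl, rfl⟩
          · exact hux.symm
          · exact hux
        · exact ((hadjdef c d).2 (Or.inr ⟨hcd, h⟩)).reachable
      -- Step 2: contract F₂.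
      have hsub' : (contractGraph F₂ x y).edgeSet ⊆
          Sym2.map (pif x y hxy) '' (F₂.edgeSet \ {s(x, y)}) := by
        intro e he
        induction e using Sym2.ind with
        | _ a b =>
          obtain ⟨hne, h⟩ := (contractGraph F₂ x y).mem_edgeSet.1 he
          rcases h with h | ⟨hax, hyb⟩ | ⟨hbx, hay⟩
          · refine ⟨s((a : V), (b : V)), ⟨(SimpleGraph.mem_edgeSet F₂).2 h, ?_⟩, ?_⟩
            · simp only [Set.mem_singleton_iff, Sym2.eq_iff]
              rintro (⟨rfl, h2⟩ | ⟨h1, rfl⟩)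
              · exact b.2 h2
              · exact a.2 h1
            · rw [Sym2.map_pair_eq, pif_val hxy, pif_val hxy]
          · refine ⟨s(y, (b : V)), ⟨(SimpleGraph.mem_edgeSet F₂).2 hyb, ?_⟩, ?_⟩
            · simp only [Set.mem_singleton_iff, Sym2.eq_iff]
              rintro (⟨h1, h2⟩ | ⟨h1, h2⟩)
              · exact hxy h1.symm
              · exact hne (hax.trans h2.symm)
            · have hax' : (⟨x, hxy⟩ : {v : V // v ≠ y}) = a := Subtype.ext hax.symm
              rw [Sym2.map_pair_eq, pif_y hxy, pif_val hxy, hax']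
          · refine ⟨s((a : V), y), ⟨(SimpleGraph.mem_edgeSet F₂).2 hay, ?_⟩, ?_⟩
            · simp only [Set.mem_singleton_iff, Sym2.eq_iff]
              rintro (⟨h1, h2⟩ | ⟨h1, h2⟩)
              · exact hne (h1.trans hbx.symm)
              · exact a.2 h1
            · have hbx' : (⟨x, hxy⟩ : {v : V // v ≠ y}) = b := Subtype.ext hbx.symm
              rw [Sym2.map_pair_eq, pif_val hxy, pif_y hxy, hbx']
      refine ⟨contractGraph F₂ x y, ?_, ?_, ?_, ?_⟩
      · rintro a b ⟨hne, h⟩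
        refine ⟨hne, ?_⟩
        rcases h with h | ⟨h1, h2⟩ | ⟨h1, h2⟩
        · exact Or.inl (hF2G h)
        · exact Or.inr (Or.inl ⟨h1, hF2G h2⟩)
        · exact Or.inr (Or.inr ⟨h1, hF2G h2⟩)
      · exact ((hfin2.diff).image _).subset hsub'
      · have h1 : (contractGraph F₂ x y).edgeSet.ncard ≤ (F₂.edgeSet \ {s(x, y)}).ncard :=
          le_trans (Set.ncard_le_ncard hsub' ((hfin2.diff).image _))
            (Set.ncard_image_le (hfin2.diff))
        have h2 := ncard_diff_singleton_add_one
          ((SimpleGraph.mem_edgeSet F₂).2 hxyF2) hfin2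
        omega
      · rintro p ⟨q, hqT, hqne, h1, h2⟩
        have hr : F₂.Reachable q.1 q.2 := hreach2 _ _ (hconn q hqT)
        have hedge : ∀ c d : V, F₂.Adj c d →
            (contractGraph F₂ x y).Reachable (pif x y hxy c) (pif x y hxy d) := by
          intro c d hcd
          by_cases hcY : c = y
          · have hdY : d ≠ y := fun h => F₂.loopless.irrefl y (by rwa [hcY, h] at hcd)
            rw [hcY, pif_y hxy, pif_of_ne hxy hdY]
            by_cases hdx : d = x
            · rw [show (⟨d, hdY⟩ : {v : V // v ≠ y}) = ⟨x, hxy⟩ from Subtype.ext hdx]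
            · exact SimpleGraph.Adj.reachable
                ⟨fun h => hdx h.symm, Or.inr (Or.inl ⟨rfl, hcY ▸ hcd⟩)⟩
          · by_cases hdY : d = y
            · rw [hdY, pif_y hxy, pif_of_ne hxy hcY]
              by_cases hcx : c = x
              · rw [show (⟨c, hcY⟩ : {v : V // v ≠ y}) = ⟨x, hxy⟩ from Subtype.ext hcx]
              · exact SimpleGraph.Adj.reachable
                  ⟨fun h => hcx h, Or.inr (Or.inr ⟨rfl, hdY ▸ hcd⟩)⟩
            · rw [pif_of_ne hxy hcY, pif_of_ne hxy hdY]
              exact SimpleGraph.Adj.reachable ⟨hcd.ne, Or.inl hcd⟩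
        have hlift := reachLift (pif x y hxy) hedge hr
        have hp1 : p.1 = pif x y hxy q.1 := Subtype.ext (by rw [pif_coe hxy, h1])
        have hp2 : p.2 = pif x y hxy q.2 := Subtype.ext (by rw [pif_coe hxy, h2])
        rw [hp1, hp2]
        exact hlift
  · rintro ⟨F', hF'G, hfin', hcard', hconn'⟩
    set F : SimpleGraph V := liftGraph G x y hxy F' with hF
    have hadjdef : ∀ a b : V, F.Adj a b ↔ (s(a, b) = s(x, y)
        ∨ (∃ (ha : a ≠ y) (hb : b ≠ y), F'.Adj ⟨a, ha⟩ ⟨b, hb⟩ ∧ G.Adj a b)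
        ∨ (a = y ∧ ∃ (hb : b ≠ y), F'.Adj ⟨x, hxy⟩ ⟨b, hb⟩ ∧ ¬G.Adj x b)
        ∨ (b = y ∧ ∃ (ha : a ≠ y), F'.Adj ⟨x, hxy⟩ ⟨a, ha⟩ ∧ ¬G.Adj x a)) :=
      fun a b => Iff.rfl
    have hxyF : F.Adj x y := (hadjdef x y).2 (Or.inl rfl)
    have hyadj : ∀ (b : V) (hb : b ≠ y), F'.Adj ⟨x, hxy⟩ ⟨b, hb⟩ → ¬G.Adj x b → G.Adj y b := by
      intro b hb h hn
      obtain ⟨hne, hor⟩ := hF'G h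
      rcases hor with h' | ⟨_, h'⟩ | ⟨hbx, _⟩
      · exact absurd h' hn
      · exact h'
      · exact absurd hbx.symm hne
    have hFG : F ≤ G := by
      intro a b hab
      rcases (hadjdef a b).1 hab with h | ⟨ha, hb, h1, h2⟩ | ⟨rfl, hb, h1, h2⟩ |
        ⟨rfl, ha, h1, h2⟩
      · rw [Sym2.eq_iff] at h
        rcases h with ⟨rfl, rfl⟩ | ⟨rfl, rfl⟩
        · exact hadj
        · exact hadj.symm
      · exact h2
      · exact hyadj b hb h1 h2
      · exact (hyadj a ha h1 h2).symm
    -- edge bound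
    set η : Sym2 {v : V // v ≠ y} → Sym2 V :=
      Sym2.lift ⟨liftEdge G x y, liftEdge_symm G x y⟩ with hη
    have hηmk : ∀ a b : {v : V // v ≠ y}, η s(a, b) = liftEdge G x y a b :=
      fun a b => Sym2.lift_mk _ a b
    have hsub : F.edgeSet ⊆ insert s(x, y) (η '' F'.edgeSet) := by
      intro e he
      induction e using Sym2.ind with
      | _ a b =>
        rcases (hadjdef a b).1 ((SimpleGraph.mem_edgeSet F).1 he) with h | ⟨ha, hb, h1, h2⟩ |
          ⟨rfl, hb, h1, h2⟩ | ⟨rfl, ha, h1, h2⟩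
        · exact Set.mem_insert_iff.2 (Or.inl h)
        · refine Set.mem_insert_iff.2 (Or.inr ⟨s(⟨a, ha⟩, ⟨b, hb⟩),
            (SimpleGraph.mem_edgeSet F').2 h1, ?_⟩)
          rw [hηmk]
          unfold liftEdge
          rw [if_neg, if_neg]
          · rintro ⟨hh1, hh2⟩
            have hh1' : b = x := hh1
            exact hh2 (hh1' ▸ h2.symm)
          · rintro ⟨hh1, hh2⟩
            have hh1' : a = x := hh1
            exact hh2 (hh1' ▸ h2)
        · refine Set.mem_insert_iff.2 (Or.inr ⟨s(⟨x, hxy⟩, ⟨b, hb⟩),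
            (SimpleGraph.mem_edgeSet F').2 h1, ?_⟩)
          rw [hηmk]
          unfold liftEdge
          rw [if_pos ⟨rfl, h2⟩]
        · refine Set.mem_insert_iff.2 (Or.inr ⟨s(⟨x, hxy⟩, ⟨a, ha⟩),
            (SimpleGraph.mem_edgeSet F').2 h1, ?_⟩)
          rw [hηmk]
          unfold liftEdge
          rw [if_pos ⟨rfl, h2⟩, Sym2.eq_swap]
    have hfinF : F.edgeSet.Finite := ((hfin'.image _).insert _).subset hsub
    have hcardF : F.edgeSet.ncard ≤ k := by
      have h1 : F.edgeSet.ncard ≤ (η '' F'.edgeSet).ncard + 1 :=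
        le_trans (Set.ncard_le_ncard hsub ((hfin'.image _).insert _))
          (Set.ncard_insert_le _ _)
      have h2 : (η '' F'.edgeSet).ncard ≤ F'.edgeSet.ncard := Set.ncard_image_le hfin'
      omega
    -- reachability
    have hedge : ∀ a b : {v : V // v ≠ y}, F'.Adj a b → F.Reachable (a : V) (b : V) := by
      intro a b h
      by_cases hG : G.Adj (a : V) (b : V)
      · exact ((hadjdef (a : V) (b : V)).2 (Or.inr (Or.inl ⟨a.2, b.2, h, hG⟩))).reachable
      · obtain ⟨hne, hor⟩ := hF'G h
        rcases hor with h' | ⟨hax, hyb⟩ | ⟨hbx, hay⟩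
        · exact absurd h' hG
        · have ha' : a = ⟨x, hxy⟩ := Subtype.ext hax
          have hb' : F'.Adj ⟨x, hxy⟩ ⟨(b : V), b.2⟩ := ha' ▸ h
          have hF1 : F.Adj y (b : V) := (hadjdef y (b : V)).2
            (Or.inr (Or.inr (Or.inl ⟨rfl, b.2, hb', hax ▸ hG⟩)))
          rw [hax]
          exact hxyF.reachable.trans hF1.reachable
        · have hb' : b = ⟨x, hxy⟩ := Subtype.ext hbx
          have ha' : F'.Adj ⟨x, hxy⟩ ⟨(a : V), a.2⟩ := hb' ▸ h.symm
          have hF1 : F.Adj (a : V) y := (hadjdef (a : V) y).2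
            (Or.inr (Or.inr (Or.inr ⟨rfl, a.2, ha', fun hh => hG (hbx ▸ hh.symm)⟩)))
          rw [hbx]
          exact hF1.reachable.trans hxyF.symm.reachable
    refine ⟨F, hFG, hfinF, hcardF, ?_⟩
    intro q hq
    by_cases hqxy : q = (x, y)
    · rw [hqxy]
      exact hxyF.reachable
    · have hmem : (pif x y hxy q.1, pif x y hxy q.2) ∈
          {p : {v : V // v ≠ y} × {v : V // v ≠ y} |
            ∃ q ∈ T, q ≠ (x, y) ∧
              (p.1 : V) = (if q.1 = y then x else q.1) ∧
              (p.2 : V) = (if q.2 = y then x else q.2)} :=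
        ⟨q, hq, hqxy, pif_coe hxy q.1, pif_coe hxy q.2⟩
      have hr' := hconn' _ hmem
      have hl := reachLift (Subtype.val) hedge hr'
      have b1 : F.Reachable q.1 ((pif x y hxy q.1 : {v : V // v ≠ y}) : V) := by
        by_cases h : q.1 = y
        · rw [h, pif_y hxy]
          exact hxyF.symm.reachable
        · rw [pif_of_ne hxy h]
      have b2 : F.Reachable q.2 ((pif x y hxy q.2 : {v : V // v ≠ y}) : V) := by
        by_cases h : q.2 = y
        · rw [h, pif_y hxy]
          exact hxyF.symm.reachable
        · rw [pif_of_ne hxy h]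
      exact (b1.trans hl).trans b2.symm
end

section
/- Let G be a graph and let L be a seeded wedge in G with ends x, y that is not juicy, and let a, b be the two vertices of L \ {x,y}. Then ab ∈ E(G) and {a,b} is complete to {x,y} in G, i.e., all four edges ax, ay, bx, by are present in G. -/
universe u

/-- `G` has treewidth at most `k`: there is a tree decomposition all of whose bags
have at most `k+1` vertices. -/
def HasTreewidthLE {V : Type u} (G : SimpleGraph V) (k : ℕ) : Prop :=
  ∃ (ι : Type u) (t : SimpleGraph ι) (bag : ι → Set V),
    t.Connected ∧ t.IsAcyclic ∧
    (∀ v : V, ∃ i, v ∈ bag i) ∧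
    (∀ u v : V, G.Adj u v → ∃ i, u ∈ bag i ∧ v ∈ bag i) ∧
    (∀ v : V, (t.induce {i : ι | v ∈ bag i}).Connected) ∧
    (∀ i : ι, (bag i).Finite ∧ (bag i).ncard ≤ k + 1)

/-- `L` is a wedge in `G` with ends `x`, `y`. -/
def IsWedge {V : Type u} (G : SimpleGraph V) (L : Set V) (x y : V) : Prop :=
  (∃ a b c : V, a ∈ L ∧ b ∈ L ∧ c ∈ L ∧ a ≠ b ∧ a ≠ c ∧ b ≠ c) ∧
  x ∈ L ∧ y ∈ L ∧ x ≠ y ∧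
  {v : V | v ∉ L \ {x, y} ∧ ∃ u ∈ L \ {x, y}, G.Adj u v} = {x, y} ∧
  (G.induce (L \ {x, y})).Connected

/-- The graph `G_L ∪ {xy}`: the induced graph `G[L]` with the edge `xy` added
(removing it first if present and adding it back yields the same graph). -/
def wedgePlus {V : Type u} (G : SimpleGraph V) (L : Set V) (x y : V) :
    SimpleGraph L where
  Adj a b := (a : V) ≠ (b : V) ∧
    (G.Adj a b ∨ ((a : V) = x ∧ (b : V) = y) ∨ ((a : V) = y ∧ (b : V) = x))
  symm := by
    constructor
    rintro a b ⟨hne, h⟩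
    refine ⟨hne.symm, ?_⟩
    rcases h with h | h | h
    · exact Or.inl h.symm
    · exact Or.inr (Or.inr ⟨h.2, h.1⟩)
    · exact Or.inr (Or.inl ⟨h.2, h.1⟩)
  loopless := ⟨fun a h => h.1 rfl⟩



lemma induce_top_conn {β : Type u} (S : Set β) (hS : S.Nonempty) :
    ((⊤ : SimpleGraph β).induce S).Connected := by
  have : Nonempty S := hS.to_subtype
  constructor
  intro p q
  by_cases h : p = q
  · subst h; exact SimpleGraph.Reachable.refl _
  · exact SimpleGraph.Adj.reachable (by
      show (⊤ : SimpleGraph β).Adj ↑p ↑q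
      exact Subtype.coe_injective.ne h)

lemma tw2_of_not_adj {α : Type u} [Finite α] (hc : Nat.card α ≤ 4)
    (G : SimpleGraph α) (u v : α) (huv : u ≠ v) (hnadj : ¬ G.Adj u v) :
    HasTreewidthLE G 2 := by
  classical
  have : Fintype α := Fintype.ofFinite α
  have hbag : ∀ w : α, ∃ i : ULift Bool, w ∈ (if i.down then ({u}ᶜ : Set α) else {v}ᶜ) := by
    intro w
    by_cases h : w = u
    · exact ⟨⟨false⟩, by simp [h]; exact huv⟩
    · exact ⟨⟨true⟩, by simpa using h⟩
  refine ⟨ULift Bool, ⊤, fun i => if i.down then {u}ᶜ else {v}ᶜ, ?_, ?_, hbag, ?_, ?_, ?_⟩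
  · exact SimpleGraph.connected_top
  · intro w c hcy
    have h3 := hcy.three_le_length
    have hn : c.support.tail.Nodup := hcy.support_nodup
    have hle := hn.length_le_card
    have hlen : c.support.tail.length = c.length := by
      have := SimpleGraph.Walk.length_support c
      simp [List.length_tail, this]
    rw [hlen] at hle
    simp at hle
    omega
  · intro p q hpq
    by_cases hp : p = u
    · refine ⟨⟨false⟩, by simp [hp]; exact huv, ?_⟩
      have hq : q ≠ v := fun h => hnadj (hp ▸ h ▸ hpq)
      simpa using hq
    · by_cases hq : q = u
      · refine ⟨⟨false⟩, ?_, by simp [hq]; exact huv⟩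
        have hp' : p ≠ v := fun h => hnadj ((hq ▸ h ▸ hpq.symm : G.Adj u v))
        simpa using hp'
      · exact ⟨⟨true⟩, by simpa using hp, by simpa using hq⟩
  · intro w
    exact induce_top_conn _ (hbag w)
  · intro i
    refine ⟨Set.toFinite _, ?_⟩
    have key : ∀ z : α, ({z}ᶜ : Set α).ncard ≤ 3 := by
      intro z
      have h1 := Set.ncard_add_ncard_compl ({z} : Set α)
      have h2 : ({z} : Set α).ncard = 1 := Set.ncard_singleton z
      omega
    obtain ⟨bb⟩ := i; cases bb <;> simpa using key _

/-- If `L` is a seeded wedge (`|L| = 4`) with ends `x, y` that is not juicy, and `a, b`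
are the two vertices of `L \ {x,y}`, then `ab ∈ E(G)` and `{a,b}` is complete to
`{x,y}`: all of `ax, ay, bx, by` are edges of `G`. -/
theorem stmt8 {V : Type u} (G : SimpleGraph V) (L : Set V) (x y : V)
    (hw : IsWedge G L x y) (hcard : L.ncard = 4)
    (hnotjuicy : ¬ HasTreewidthLE (wedgePlus G L x y) 2)
    (a b : V) (ha : a ∈ L) (hb : b ∈ L)
    (ha' : a ∉ ({x, y} : Set V)) (hb' : b ∉ ({x, y} : Set V)) (hab : a ≠ b) :
    G.Adj a b ∧ G.Adj a x ∧ G.Adj a y ∧ G.Adj b x ∧ G.Adj b y := by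
  simp only [Set.mem_insert_iff, Set.mem_singleton_iff, not_or] at ha' hb'
  obtain ⟨hax, hay⟩ := ha'
  obtain ⟨hbx, hby⟩ := hb'
  have hx : x ∈ L := hw.2.1
  have hy : y ∈ L := hw.2.2.1
  have hfinL : L.Finite := by
    by_contra h
    rw [Set.Infinite.ncard (h : L.Infinite)] at hcard
    omega
  have : Finite ↥L := hfinL.to_subtype
  have hcardL : Nat.card ↥L ≤ 4 := by
    rw [Nat.card_coe_set_eq, hcard]
  refine ⟨?_, ?_, ?_, ?_, ?_⟩
  · by_contra h
    refine hnotjuicy (tw2_of_not_adj hcardL _ ⟨a, ha⟩ ⟨b, hb⟩ ?_ ?_)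
    · exact fun he => hab (Subtype.ext_iff.mp he)
    · rintro ⟨-, hG | ⟨h1, h2⟩ | ⟨h1, h2⟩⟩
      exacts [h hG, hax h1, hay h1]
  · by_contra h
    refine hnotjuicy (tw2_of_not_adj hcardL _ ⟨a, ha⟩ ⟨x, hx⟩ ?_ ?_)
    · exact fun he => hax (Subtype.ext_iff.mp he)
    · rintro ⟨-, hG | ⟨h1, h2⟩ | ⟨h1, h2⟩⟩
      exacts [h hG, hax h1, hay h1]
  · by_contra h
    refine hnotjuicy (tw2_of_not_adj hcardL _ ⟨a, ha⟩ ⟨y, hy⟩ ?_ ?_)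
    · exact fun he => hay (Subtype.ext_iff.mp he)
    · rintro ⟨-, hG | ⟨h1, h2⟩ | ⟨h1, h2⟩⟩
      exacts [h hG, hax h1, hay h1]
  · by_contra h
    refine hnotjuicy (tw2_of_not_adj hcardL _ ⟨b, hb⟩ ⟨x, hx⟩ ?_ ?_)
    · exact fun he => hbx (Subtype.ext_iff.mp he)
    · rintro ⟨-, hG | ⟨h1, h2⟩ | ⟨h1, h2⟩⟩
      exacts [h hG, hbx h1, hby h1]
  · by_contra h
    refine hnotjuicy (tw2_of_not_adj hcardL _ ⟨b, hb⟩ ⟨y, hy⟩ ?_ ?_)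
    · exact fun he => hby (Subtype.ext_iff.mp he)
    · rintro ⟨-, hG | ⟨h1, h2⟩ | ⟨h1, h2⟩⟩
      exacts [h hG, hbx h1, hby h1]
end

section
/- Let G be a graph containing a juicy citrus with ends x, y and wedge set 𝓛 such that the vesicle set V(x,y,𝓛) equals V(G). Then G has treewidth at most 2. -/
universe u

section Glue

open SimpleGraph

variable {Λ : Type u} {ι : Λ → Type u}

/-- Glue a family of graphs at a hub. -/
def glueGraph (t : ∀ L, SimpleGraph (ι L)) (i₀ : ∀ L, ι L) :
    SimpleGraph (Option (Σ L, ι L)) where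
  Adj a b := match a, b with
    | none, none => False
    | none, some q => q.2 = i₀ q.1
    | some p, none => p.2 = i₀ p.1
    | some p, some q => ∃ h : p.1 = q.1, (t q.1).Adj (h ▸ p.2) q.2
  symm := by
    constructor
    rintro (_ | ⟨L, i⟩) (_ | ⟨M, j⟩) h
    · exact h
    · exact h
    · exact h
    · obtain ⟨h1, h2⟩ := h
      dsimp at h1
      subst h1
      exact ⟨rfl, h2.symm⟩
  loopless := by
    constructor
    rintro (_ | ⟨L, i⟩) h
    · exact h
    · obtain ⟨h1, h2⟩ := h
      exact (t L).loopless.irrefl _ h2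

variable {t : ∀ L, SimpleGraph (ι L)} {i₀ : ∀ L, ι L}

lemma glue_adj_some {L : Λ} {i j : ι L} (h : (t L).Adj i j) :
    (glueGraph t i₀).Adj (some ⟨L, i⟩) (some ⟨L, j⟩) := ⟨rfl, h⟩

lemma glue_adj_hub (L : Λ) :
    (glueGraph t i₀).Adj none (some ⟨L, i₀ L⟩) := rfl

/-- The embedding of a component as a graph hom. -/
def glueHom (t : ∀ L, SimpleGraph (ι L)) (i₀ : ∀ L, ι L) (L : Λ) :
    t L →g glueGraph t i₀ where
  toFun i := some ⟨L, i⟩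
  map_rel' h := glue_adj_some h

lemma glue_connected (hc : ∀ L, (t L).Connected) : (glueGraph t i₀).Connected := by
  have key : ∀ a : Option (Σ L, ι L), (glueGraph t i₀).Reachable none a := by
    rintro (_ | ⟨L, i⟩)
    · exact Reachable.refl _
    · refine ((glue_adj_hub (i₀ := i₀) L).reachable).trans ?_
      exact ((hc L).preconnected (i₀ L) i).map (glueHom t i₀ L)
  have : Nonempty (Option (Σ L, ι L)) := ⟨none⟩
  exact ⟨fun a b => (key a).symm.trans (key b)⟩

/-- Projection lemma: a walk avoiding the hub stays within one component. -/
lemma glue_proj : ∀ {u v : Option (Σ L, ι L)} (w : (glueGraph t i₀).Walk u v)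
    (_ : none ∉ w.support) {L : Λ} {i : ι L} (_ : u = some ⟨L, i⟩),
    ∃ (j : ι L) (w' : (t L).Walk i j), v = some ⟨L, j⟩ ∧
      w.support = w'.support.map (fun k => some ⟨L, k⟩) ∧
      w.edges = w'.edges.map (Sym2.map (fun k => some ⟨L, k⟩)) := by
  intro u v w
  induction w with
  | nil =>
    rintro hn L i rfl
    exact ⟨i, Walk.nil, rfl, rfl, rfl⟩
  | @cons a b c hab p ih =>
    rintro hn L i rfl
    have hbn : b ≠ none := by
      intro h; subst h
      exact hn (by simp [Walk.support_cons, Walk.start_mem_support])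
    obtain ⟨q, rfl⟩ := Option.ne_none_iff_exists'.mp hbn
    obtain ⟨h1, h2⟩ := id hab
    dsimp at h1
    obtain ⟨M, j⟩ := q
    dsimp at h1
    subst h1
    have hn' : none ∉ p.support := fun h => hn (by simp [Walk.support_cons, h])
    obtain ⟨k, w', rfl, hs, he⟩ := ih hn' rfl
    refine ⟨k, Walk.cons h2 w', rfl, ?_, ?_⟩
    · simp [Walk.support_cons, hs]
    · simp [Walk.edges_cons, he]

lemma glue_inj (L : Λ) : Function.Injective (fun k : ι L => (some ⟨L, k⟩ : Option (Σ L, ι L))) := by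
  intro a b h
  simpa using h

lemma walk_loop_length_zero {W : Type*} {G : SimpleGraph W} {u v : W} (p : G.Walk u v)
    (he : u = v) (h : p.support.Nodup) : p.length = 0 := by
  subst he
  cases p with
  | nil => rfl
  | cons h' q =>
    rw [Walk.support_cons] at h
    exact absurd q.end_mem_support (List.nodup_cons.mp h).1

lemma glue_acyclic (ha : ∀ L, (t L).IsAcyclic) : (glueGraph t i₀).IsAcyclic := by
  classical
  intro v c hc
  by_cases hnone : (none : Option (Σ L, ι L)) ∈ c.support
  · -- rotate so the cycle starts at the hub
    have hdc : (c.rotate none hnone).IsCycle := hc.rotate hnone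
    obtain ⟨a, h, p, hdeq⟩ := Walk.not_nil_iff.mp hdc.not_nil
    rw [hdeq] at hdc
    have hna : a ≠ none := fun h' => by subst h'; exact (glueGraph t i₀).loopless.irrefl none h
    obtain ⟨qa, rfl⟩ := Option.ne_none_iff_exists'.mp hna
    have hqa : qa.2 = i₀ qa.1 := h.symm
    have hps : p.support.Nodup := by
      have := hdc.support_nodup
      simpa [Walk.support_cons] using this
    have hprn : ¬ p.reverse.Nil := by
      intro hnil
      exact (Option.some_ne_none qa).symm
        (Walk.eq_of_length_eq_zero (Walk.nil_iff_length_eq.mp hnil) :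
          (none : Option (Σ L, ι L)) = some qa)
    obtain ⟨b, h', p'', hpr⟩ := Walk.not_nil_iff.mp hprn
    have hnb : b ≠ none := fun h2 => by subst h2; exact (glueGraph t i₀).loopless.irrefl none h'
    obtain ⟨qb, rfl⟩ := Option.ne_none_iff_exists'.mp hnb
    have hqb : qb.2 = i₀ qb.1 := h'
    have hprs : p.reverse.support.Nodup := by
      rw [Walk.support_reverse, List.nodup_reverse]; exact hps
    rw [hpr, Walk.support_cons] at hprs
    have hn'' : (none : Option (Σ L, ι L)) ∉ p''.support := (List.nodup_cons.mp hprs).1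
    obtain ⟨j, w', hqa2, -, -⟩ := glue_proj (L := qb.1) (i := qb.2) p'' hn'' rfl
    obtain rfl : qa = ⟨qb.1, j⟩ := Option.some_injective _ hqa2
    have hab : (some qb : Option (Σ L, ι L)) = some ⟨qb.1, j⟩ := by
      congr 1
      have : j = i₀ qb.1 := hqa
      rw [this, ← hqb]
    -- p'' is a closed walk with nodup support, hence nil
    have hp''0 : p''.length = 0 := walk_loop_length_zero p'' hab (List.nodup_cons.mp hprs).2
    have hplen : p.length = 1 := by
      have : p.reverse.length = 1 := by rw [hpr]; simp [hp''0]
      simpa using this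
    have := hdc.three_le_length
    simp [hplen] at this
  · -- cycle avoiding the hub
    have hvn : v ≠ none := fun h' => hnone (h' ▸ c.start_mem_support)
    obtain ⟨⟨L, i⟩, rfl⟩ := Option.ne_none_iff_exists'.mp hvn
    obtain ⟨j, w', hv, hs, he⟩ := glue_proj c hnone rfl
    obtain rfl : i = j := by
      have h2 : (⟨L, i⟩ : Σ L, ι L) = ⟨L, j⟩ := Option.some_injective _ hv
      simpa using h2
    refine ha L w' ((w'.isCycle_def).mpr ⟨?_, ?_, ?_⟩)
    · rw [Walk.isTrail_def]
      have := hc.edges_nodup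
      rw [he] at this
      exact (List.nodup_map_iff (Sym2.map.injective (glue_inj L))).mp this
    · intro hnil
      subst hnil
      have := hc.three_le_length
      have h0 : c.length = 0 := by
        have := congrArg List.length hs
        simpa [Walk.length_support] using this
      omega
    · have := hc.support_nodup
      rw [hs, ← List.map_tail] at this
      exact (List.nodup_map_iff (glue_inj L)).mp this

end Glue

section Main

variable {V : Type u} {G : SimpleGraph V} {x y : V} {𝓛 : Set (Set V)}

lemma wedge_nbr (hw : ∀ L ∈ 𝓛, IsWedge G L x y) {L : Set V} (hL : L ∈ 𝓛)
    {u : V} (hu : u ∈ L \ {x, y}) {v : V} (hadj : G.Adj u v) : v ∈ L := by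
  by_cases hv : v ∈ L \ {x, y}
  · exact hv.1
  · have hvxy : v ∈ ({x, y} : Set V) := by
      rw [← (hw L hL).2.2.2.2.1]
      exact ⟨hv, u, hu, hadj⟩
    rcases hvxy with h | h
    · exact h ▸ (hw L hL).2.1
    · exact h ▸ (hw L hL).2.2.1

lemma wedge_uniq (hw : ∀ L ∈ 𝓛, IsWedge G L x y) {L L' : Set V} (hL : L ∈ 𝓛)
    (hL' : L' ∈ 𝓛) {v : V} (hv : v ∉ ({x, y} : Set V)) (h1 : v ∈ L) (h2 : v ∈ L') :
    L = L' := by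
  have key : ∀ M ∈ 𝓛, ∀ M' ∈ 𝓛, v ∈ M → v ∈ M' → M \ {x, y} ⊆ M' \ {x, y} := by
    intro M hM M' hM' hvM hvM' u hu
    have hvd : v ∈ M \ {x, y} := ⟨hvM, hv⟩
    have hvd' : v ∈ M' \ {x, y} := ⟨hvM', hv⟩
    obtain ⟨w⟩ := (hw M hM).2.2.2.2.2.preconnected ⟨v, hvd⟩ ⟨u, hu⟩
    have inv : ∀ (a b : ↥(M \ {x, y})) (_ : (G.induce (M \ {x, y})).Walk a b),
        (a : V) ∈ M' \ {x, y} → (b : V) ∈ M' \ {x, y} := by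
      intro a b p
      induction p with
      | nil => exact id
      | @cons a c b hac q ih =>
        intro ha
        refine ih ⟨wedge_nbr hw hM' ha hac, c.2.2⟩
    exact inv _ _ w hvd'
  have hpair : ∀ M ∈ 𝓛, ({x, y} : Set V) ⊆ M := by
    intro M hM
    rw [Set.insert_subset_iff, Set.singleton_subset_iff]
    exact ⟨(hw M hM).2.1, (hw M hM).2.2.1⟩
  have hdiff : L \ {x, y} = L' \ {x, y} :=
    subset_antisymm (key L hL L' hL' h1 h2) (key L' hL' L hL h2 h1)
  calc L = L \ {x, y} ∪ {x, y} := (Set.diff_union_of_subset (hpair L hL)).symm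
    _ = L' \ {x, y} ∪ {x, y} := by rw [hdiff]
    _ = L' := Set.diff_union_of_subset (hpair L' hL')

end Main

/-- If `G` contains a juicy citrus with ends `x, y` and wedge set `𝓛` whose vesicle
set `{x,y} ∪ ⋃ 𝓛` is all of `V(G)`, then `G` has treewidth at most 2.
(A citrus is a set of wedges all with ends `x, y`, such that the wedge set is nonempty
or `xy ∈ E(G)`; it is juicy if each wedge `L` is juicy, i.e. `G_L ∪ {xy}` has
treewidth at most 2.) -/
theorem stmt9 {V : Type u} (G : SimpleGraph V) (x y : V) (𝓛 : Set (Set V))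
    (hwedge : ∀ L ∈ 𝓛, IsWedge G L x y)
    (hjuicy : ∀ L ∈ 𝓛, HasTreewidthLE (wedgePlus G L x y) 2)
    (hcitrus : 𝓛.Nonempty ∨ G.Adj x y)
    (hcover : ({x, y} : Set V) ∪ ⋃₀ 𝓛 = Set.univ) :
    HasTreewidthLE G 2 := by
  classical
  choose ιf tf bagf hTconn hTacy hTcov hTedge hTvert hTsize using
    (fun L : ↥𝓛 => hjuicy L.1 L.2 :
      ∀ L : ↥𝓛, ∃ (ι : Type u) (t : SimpleGraph ι) (bag : ι → Set ↥(L.1)),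
      t.Connected ∧ t.IsAcyclic ∧
      (∀ v, ∃ i, v ∈ bag i) ∧
      (∀ u v, (wedgePlus G L.1 x y).Adj u v → ∃ i, u ∈ bag i ∧ v ∈ bag i) ∧
      (∀ v, (t.induce {i | v ∈ bag i}).Connected) ∧
      (∀ i, (bag i).Finite ∧ (bag i).ncard ≤ 2 + 1))
  have hxm : ∀ L : ↥𝓛, x ∈ L.1 := fun L => (hwedge L.1 L.2).2.1
  have hym : ∀ L : ↥𝓛, y ∈ L.1 := fun L => (hwedge L.1 L.2).2.2.1
  choose i₀ hix hiy using
    (fun L : ↥𝓛 => hTedge L ⟨x, hxm L⟩ ⟨y, hym L⟩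
      (And.intro (hwedge L.1 L.2).2.2.2.1 (Or.inr (Or.inl ⟨rfl, rfl⟩))) :
      ∀ L : ↥𝓛, ∃ i, (⟨x, hxm L⟩ : ↥(L.1)) ∈ bagf L i ∧ (⟨y, hym L⟩ : ↥(L.1)) ∈ bagf L i)
  set bagF : Option (Σ L : ↥𝓛, ιf L) → Set V :=
    fun a => a.elim {x, y} (fun p => Subtype.val '' bagf p.1 p.2) with hbagF
  have hmem_iff : ∀ (L : ↥𝓛) (i : ιf L) (w : V) (hw : w ∈ L.1),
      w ∈ bagF (some ⟨L, i⟩) ↔ (⟨w, hw⟩ : ↥(L.1)) ∈ bagf L i := by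
    intro L i w hw
    constructor
    · rintro ⟨u, hu, rfl⟩
      exact (Subtype.ext rfl : u = ⟨u.1, hw⟩) ▸ hu
    · intro h
      exact ⟨⟨w, hw⟩, h, rfl⟩
  have hmem_sub : ∀ (L : ↥𝓛) (i : ιf L) (w : V), w ∈ bagF (some ⟨L, i⟩) → w ∈ L.1 := by
    rintro L i w ⟨u, hu, rfl⟩
    exact u.2
  refine ⟨Option (Σ L : ↥𝓛, ιf L), glueGraph tf i₀, bagF,
    glue_connected hTconn, glue_acyclic hTacy, ?_, ?_, ?_, ?_⟩
  · -- cover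
    intro v
    have hv : v ∈ ({x, y} : Set V) ∪ ⋃₀ 𝓛 := hcover ▸ Set.mem_univ v
    rcases hv with hv | ⟨L, hL, hvL⟩
    · exact ⟨none, hv⟩
    · obtain ⟨i, hi⟩ := hTcov ⟨L, hL⟩ ⟨v, hvL⟩
      exact ⟨some ⟨⟨L, hL⟩, i⟩, ⟨⟨v, hvL⟩, hi, rfl⟩⟩
  · -- edges
    have key : ∀ u v, G.Adj u v → u ∉ ({x, y} : Set V) →
        ∃ i, u ∈ bagF i ∧ v ∈ bagF i := by
      intro u v hadj hu
      have hu' : u ∈ ⋃₀ 𝓛 := by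
        have : u ∈ ({x, y} : Set V) ∪ ⋃₀ 𝓛 := hcover ▸ Set.mem_univ u
        exact ((Set.mem_union _ _ _).mp this).resolve_left hu
      obtain ⟨L, hL, huL⟩ := hu'
      have hvL : v ∈ L := wedge_nbr hwedge hL ⟨huL, hu⟩ hadj
      obtain ⟨i, h1, h2⟩ := hTedge ⟨L, hL⟩ ⟨u, huL⟩ ⟨v, hvL⟩ (And.intro hadj.ne (Or.inl hadj))
      exact ⟨some ⟨⟨L, hL⟩, i⟩, (hmem_iff _ i u huL).mpr h1, (hmem_iff _ i v hvL).mpr h2⟩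
    intro u v hadj
    by_cases hu : u ∈ ({x, y} : Set V)
    · by_cases hv : v ∈ ({x, y} : Set V)
      · exact ⟨none, hu, hv⟩
      · obtain ⟨i, h1, h2⟩ := key v u hadj.symm hv
        exact ⟨i, h2, h1⟩
    · exact key u v hadj hu
  · -- vertex connectivity
    intro v
    by_cases hv : v ∈ ({x, y} : Set V)
    · -- v is an end: the hub bag contains it, and all components attach at the hub
      have hvL : ∀ L : ↥𝓛, v ∈ L.1 := by
        rcases hv with h | h
        · exact fun L => h ▸ hxm L
        · exact fun L => h ▸ hym L
      have hvi₀ : ∀ L : ↥𝓛, (⟨v, hvL L⟩ : ↥(L.1)) ∈ bagf L (i₀ L) := by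
        rcases hv with h | h
        · subst h; exact hix
        · subst h; exact hiy
      have hnoneS : (none : Option (Σ L : ↥𝓛, ιf L)) ∈ {a | v ∈ bagF a} := hv
      have reach : ∀ a : ↥{a | v ∈ bagF a},
          ((glueGraph tf i₀).induce {a | v ∈ bagF a}).Reachable ⟨none, hnoneS⟩ a := by
        rintro ⟨(_ | ⟨L, i⟩), ha⟩
        · exact SimpleGraph.Reachable.refl _
        · have hvb : (⟨v, hvL L⟩ : ↥(L.1)) ∈ bagf L i := (hmem_iff L i v (hvL L)).mp ha
          have hi₀S : some (⟨L, i₀ L⟩ : Σ L : ↥𝓛, ιf L) ∈ {a | v ∈ bagF a} :=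
            (hmem_iff L (i₀ L) v (hvL L)).mpr (hvi₀ L)
          have step : ((glueGraph tf i₀).induce {a | v ∈ bagF a}).Adj
              ⟨none, hnoneS⟩ ⟨some ⟨L, i₀ L⟩, hi₀S⟩ := glue_adj_hub (t := tf) (i₀ := i₀) L
          refine step.reachable.trans ?_
          have hconn := hTvert L ⟨v, hvL L⟩
          have hr := hconn.preconnected ⟨i₀ L, hvi₀ L⟩ ⟨i, hvb⟩
          let f : ((tf L).induce {i | (⟨v, hvL L⟩ : ↥(L.1)) ∈ bagf L i}) →g
              ((glueGraph tf i₀).induce {a | v ∈ bagF a}) :=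
            { toFun := fun p => ⟨some ⟨L, p.1⟩, (hmem_iff L p.1 v (hvL L)).mpr p.2⟩,
              map_rel' := fun h => glue_adj_some (i₀ := i₀) h }
          exact hr.map f
      have : Nonempty ↥{a | v ∈ bagF a} := ⟨⟨none, hnoneS⟩⟩
      exact ⟨fun a b => (reach a).symm.trans (reach b)⟩
    · -- v is internal to a unique wedge
      have hv' : v ∈ ⋃₀ 𝓛 := by
        have : v ∈ ({x, y} : Set V) ∪ ⋃₀ 𝓛 := hcover ▸ Set.mem_univ v
        exact ((Set.mem_union _ _ _).mp this).resolve_left hv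
      obtain ⟨L, hL, hvL⟩ := hv'
      set L' : ↥𝓛 := ⟨L, hL⟩ with hL'
      let f : ((tf L').induce {i | (⟨v, hvL⟩ : ↥(L'.1)) ∈ bagf L' i}) →g
          ((glueGraph tf i₀).induce {a | v ∈ bagF a}) :=
        { toFun := fun p => ⟨some ⟨L', p.1⟩, (hmem_iff L' p.1 v hvL).mpr p.2⟩,
          map_rel' := fun h => glue_adj_some (i₀ := i₀) h }
      refine (hTvert L' ⟨v, hvL⟩).map f ?_
      rintro ⟨(_ | ⟨M, i⟩), ha⟩
      · exact absurd ha hv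
      · have hvM : v ∈ M.1 := hmem_sub M i v ha
        have hML : M = L' := Subtype.ext (wedge_uniq hwedge M.2 hL hv hvM hvL)
        subst hML
        exact ⟨⟨i, (hmem_iff L' i v hvL).mp ha⟩, rfl⟩
  · -- bag sizes
    rintro (_ | ⟨L, i⟩)
    · refine ⟨(Set.finite_singleton y).insert x, ?_⟩
      calc ({x, y} : Set V).ncard ≤ ({y} : Set V).ncard + 1 := Set.ncard_insert_le x {y}
        _ ≤ 2 + 1 := by simp
    · refine ⟨(hTsize L i).1.image _, ?_⟩
      show (Subtype.val '' bagf L i).ncard ≤ 2 + 1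
      rw [Set.ncard_image_of_injective _ Subtype.val_injective]
      exact (hTsize L i).2
end

section
/- Let G be a 2-connected graph that contains no subgraph isomorphic to P_10 (the path on 10 vertices), let P = (v_1,...,v_9) be a longest path in G, and let D be a connected component of G − V(P) with at least 2 vertices. Then G[D] is a star: there is a vertex x in D adjacent to all other vertices of D, and D has no other edges. -/
/-- `G` is 2-connected: at least 3 vertices, connected, and no cut vertex. -/
def TwoConnected {V : Type*} (G : SimpleGraph V) : Prop :=
  3 ≤ Nat.card V ∧ G.Connected ∧ ∀ v : V, (G.induce {u : V | u ≠ v}).Connected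

/-- `G` contains the subdivided claw `S_{a,b,c}` (three paths of edge-lengths
`a`, `b`, `c` sharing one common endpoint, otherwise disjoint) as a subgraph. -/
def ContainsSubdividedClaw {V : Type*} (G : SimpleGraph V) (a b c : ℕ) : Prop :=
  ∃ (f : Fin (a + 1) → V) (g : Fin (b + 1) → V) (h : Fin (c + 1) → V),
    f 0 = g 0 ∧ g 0 = h 0 ∧
    IsPathEmb G (a + 1) f ∧ IsPathEmb G (b + 1) g ∧ IsPathEmb G (c + 1) h ∧
    (∀ i j, f i = g j → i = 0 ∧ j = 0) ∧
    (∀ i j, f i = h j → i = 0 ∧ j = 0) ∧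
    (∀ i j, g i = h j → i = 0 ∧ j = 0)


namespace Stmt12Aux

/-- All the data we need about the ambient graph. -/
structure Ctx (V : Type*) where
  G : SimpleGraph V
  f : Fin 9 → V
  finj : Function.Injective f
  fadj : ∀ i : ℕ, (h : i < 8) → G.Adj (f ⟨i, by omega⟩) (f ⟨i + 1, by omega⟩)
  nolong : ∀ L : List V, L.Chain' G.Adj → L.Nodup → L.length ≤ 9
  conn2 : ∀ v : V, (G.induce {u : V | u ≠ v}).Connected

variable {V : Type*} (C : Ctx V)

def Ctx.vf (k : ℕ) : V := C.f ⟨min k 8, by omega⟩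

def Ctx.S : Set V := (Set.range C.f)ᶜ

/-- A "path inside `G - P`": chain of adjacent, distinct vertices avoiding the path `f`. -/
def Ctx.DP (L : List V) : Prop :=
  L.Chain' C.G.Adj ∧ L.Nodup ∧ ∀ x ∈ L, x ∈ C.S

/-- `z` is attached to the `u`-th vertex of the path. -/
def Ctx.Att (z : V) (u : ℕ) : Prop := u ≤ 8 ∧ C.G.Adj z (C.vf u)

variable {C}

lemma vf_eq {k : ℕ} (hk : k ≤ 8) : C.vf k = C.f ⟨k, by omega⟩ := by
  unfold Ctx.vf; congr 1; exact Fin.ext (by simp [Nat.min_eq_left hk])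

lemma vf_inj {k l : ℕ} (hk : k ≤ 8) (hl : l ≤ 8) (h : C.vf k = C.vf l) : k = l := by
  rw [vf_eq hk, vf_eq hl] at h
  have := C.finj h
  simpa [Fin.ext_iff] using this

lemma vf_adj {k : ℕ} (h : k < 8) : C.G.Adj (C.vf k) (C.vf (k + 1)) := by
  rw [vf_eq (by omega), vf_eq (by omega)]; exact C.fadj k h

lemma vf_not_S (k : ℕ) : C.vf k ∉ C.S := by
  intro h; exact h ⟨_, rfl⟩

lemma mem_S_ne_vf {x : V} (hx : x ∈ C.S) (k : ℕ) : x ≠ C.vf k := by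
  rintro rfl; exact vf_not_S k hx

/-- ascending run of path vertices -/
def Ctx.asc (i n : ℕ) : List V := (List.range' i n).map C.vf

lemma asc_length (i n : ℕ) : (C.asc i n).length = n := by simp [Ctx.asc]

lemma mem_asc {x : V} {i n : ℕ} (h : x ∈ C.asc i n) : ∃ k, i ≤ k ∧ k < i + n ∧ x = C.vf k := by
  simp only [Ctx.asc, List.mem_map, List.mem_range'_1] at h
  obtain ⟨k, ⟨h1, h2⟩, rfl⟩ := h
  exact ⟨k, h1, h2, rfl⟩

lemma asc_not_S {x : V} {i n : ℕ} (h : x ∈ C.asc i n) : x ∉ C.S := by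
  obtain ⟨k, _, _, rfl⟩ := mem_asc h; exact vf_not_S k

lemma asc_chain' {i n : ℕ} (h : i + n ≤ 9) : (C.asc i n).Chain' C.G.Adj := by
  rw [Ctx.asc, List.Chain', List.isChain_map, List.isChain_iff_getElem]
  intro j hj
  simp only [List.get_eq_getElem, List.getElem_range']
  simp only [List.length_range'] at hj
  have : i + 1 * j + 1 = i + 1 * (j + 1) := by ring
  rw [← this]
  exact vf_adj (by omega)

lemma asc_nodup {i n : ℕ} (h : i + n ≤ 9) : (C.asc i n).Nodup := by
  rw [Ctx.asc]
  refine List.Nodup.map_on ?_ (List.nodup_range' (s := i) (n := n))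
  intro a ha b hb hab
  rw [List.mem_range'_1] at ha hb
  exact vf_inj (by omega) (by omega) hab

lemma asc_head? {i n : ℕ} (h : 0 < n) : (C.asc i n).head? = some (C.vf i) := by
  cases n with
  | zero => omega
  | succ m => simp [Ctx.asc, List.range'_succ]

lemma asc_getLast? {i n : ℕ} (h : 0 < n) : (C.asc i n).getLast? = some (C.vf (i + n - 1)) := by
  cases n with
  | zero => omega
  | succ m =>
    rw [Ctx.asc, List.range'_concat, List.map_append]
    simp

/-- reversed ascending run -/
lemma asc_rev_head? {i n : ℕ} (h : 0 < n) :
    (C.asc i n).reverse.head? = some (C.vf (i + n - 1)) := by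
  rw [List.head?_reverse]; exact asc_getLast? h

lemma asc_rev_getLast? {i n : ℕ} (h : 0 < n) :
    (C.asc i n).reverse.getLast? = some (C.vf i) := by
  rw [List.getLast?_reverse]; exact asc_head? h

lemma chain'_adj_reverse {L : List V} (h : L.Chain' C.G.Adj) :
    L.reverse.Chain' C.G.Adj := by
  rw [List.Chain', List.isChain_reverse]
  exact h.imp (fun a b hab => hab.symm)

/-- The main gluing lemma: a `DP`-list `L` with `P`-segments glued on both sides has
length at most `9`. -/
lemma sandwich {Pre Post L : List V}
    (hL : C.DP L) (hLne : L ≠ [])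
    (hPre : Pre.Chain' C.G.Adj) (hPost : Post.Chain' C.G.Adj)
    (hPreN : Pre.Nodup) (hPostN : Post.Nodup)
    (hPreF : ∀ x ∈ Pre, x ∉ C.S) (hPostF : ∀ x ∈ Post, x ∉ C.S)
    (hPP : ∀ x ∈ Pre, x ∉ Post)
    (hadj1 : ∀ x ∈ Pre.getLast?, ∀ y ∈ L.head?, C.G.Adj x y)
    (hadj2 : ∀ x ∈ L.getLast?, ∀ y ∈ Post.head?, C.G.Adj x y) :
    Pre.length + L.length + Post.length ≤ 9 := by
  obtain ⟨hc, hn, hs⟩ := hL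
  have hgl : (Pre ++ L).getLast? = L.getLast? := by
    rw [List.getLast?_append]
    obtain ⟨z, hz⟩ := Option.isSome_iff_exists.1 (List.getLast?_isSome.2 hLne)
    simp [hz]
  have hchain : ((Pre ++ L) ++ Post).Chain' C.G.Adj := by
    rw [List.Chain', List.isChain_append]
    refine ⟨?_, hPost, ?_⟩
    · rw [List.isChain_append]; exact ⟨hPre, hc, hadj1⟩
    · rw [hgl]; exact hadj2
  have hnodup : ((Pre ++ L) ++ Post).Nodup := by
    rw [List.nodup_append]
    refine ⟨?_, hPostN, ?_⟩
    · rw [List.nodup_append]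
      exact ⟨hPreN, hn, fun x hx y hx2 hxy => by subst hxy; exact hPreF x hx (hs x hx2)⟩
    · intro x hx y hx2 hxy; subst hxy
      rcases List.mem_append.1 hx with h | h
      · exact hPP x h hx2
      · exact hPostF x hx2 (hs x h)
  have := C.nolong _ hchain hnodup
  simp at this; omega


lemma DP.reverse {L : List V} (h : C.DP L) : C.DP L.reverse :=
  ⟨chain'_adj_reverse h.1, List.nodup_reverse.2 h.2.1, fun x hx => h.2.2 x (List.mem_reverse.1 hx)⟩

lemma length_pos_of_head? {L : List V} {z : V} (h : L.head? = some z) : 0 < L.length := by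
  cases L with
  | nil => simp at h
  | cons a l => simp

lemma head_mem_of_head? {L : List V} {z : V} (h : L.head? = some z) : z ∈ L := by
  cases L with
  | nil => simp at h
  | cons a l => simp at h; subst h; simp

lemma last_mem_of_getLast? {L : List V} {z : V} (h : L.getLast? = some z) : z ∈ L := by
  have : z ∈ L.reverse := head_mem_of_head? (by rw [List.head?_reverse]; exact h)
  exact List.mem_reverse.1 this

lemma length_two_of_ne {L : List V} {x y : V} (hh : L.head? = some x)
    (hl : L.getLast? = some y) (hxy : x ≠ y) : 2 ≤ L.length := by
  cases L with
  | nil => simp at hh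
  | cons a t =>
    cases t with
    | nil =>
      simp at hh hl
      subst hh; subst hl; exact absurd rfl hxy
    | cons b t' => simp

lemma list_eq_pair {L : List V} {x y : V} (hlen : L.length = 2) (hh : L.head? = some x)
    (hl : L.getLast? = some y) : L = [x, y] := by
  cases L with
  | nil => simp at hlen
  | cons a t =>
    cases t with
    | nil => simp at hlen
    | cons b t' =>
      cases t' with
      | nil =>
        simp at hh hl; subst hh; subst hl; rfl
      | cons c t'' => simp at hlen

/-- Lemma (A): a `D`-path ending at a vertex attached to `v_u` has length at most
`min u (8-u)`. -/
lemma lemA {L : List V} {z : V} {u : ℕ} (hL : C.DP L) (hlast : L.getLast? = some z)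
    (hatt : C.Att z u) : L.length ≤ u ∧ L.length ≤ 8 - u := by
  obtain ⟨hu, hadj⟩ := hatt
  have hLne : L ≠ [] := by rintro rfl; simp at hlast
  constructor
  · -- glue ascending ray [v_u, ..., v_8] after L
    have h := sandwich (Pre := []) (Post := C.asc u (9 - u)) hL hLne
      List.IsChain.nil (asc_chain' (by omega)) (by simp) (asc_nodup (by omega))
      (by simp) (fun x hx => asc_not_S hx) (by simp)
      (by simp)
      (by
        rw [hlast, asc_head? (by omega)]
        intro x hx y hy
        simp at hx hy; subst hx; subst hy; exact hadj)
    simp [asc_length] at h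
    omega
  · -- glue descending ray [v_u, ..., v_0] after L
    have h := sandwich (Pre := []) (Post := (C.asc 0 (u + 1)).reverse) hL hLne
      List.IsChain.nil (chain'_adj_reverse (asc_chain' (by omega))) (by simp)
      (List.nodup_reverse.2 (asc_nodup (by omega)))
      (by simp) (fun x hx => asc_not_S (List.mem_reverse.1 hx)) (by simp)
      (by simp)
      (by
        rw [hlast, asc_rev_head? (by omega)]
        intro x hx y hy
        simp at hx hy; subst hx; subst hy
        first
          | exact hadj
          | (convert hadj using 2; omega))
    simp [asc_length] at h
    omega

/-- Lemma (B), one-sided version `u' < u`. -/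
lemma lemB' {L : List V} {z z' : V} {u u' : ℕ} (hL : C.DP L) (hhead : L.head? = some z')
    (hlast : L.getLast? = some z) (h1 : C.Att z' u') (h2 : C.Att z u) (hlt : u' < u) :
    L.length ≤ 2 := by
  obtain ⟨hu', hadj'⟩ := h1
  obtain ⟨hu, hadj⟩ := h2
  have hLne : L ≠ [] := by rintro rfl; simp at hhead
  -- X1 : v_0..v_u' ++ L ++ v_u..v_8
  have hX1 := sandwich (Pre := C.asc 0 (u' + 1)) (Post := C.asc u (9 - u)) hL hLne
    (asc_chain' (by omega)) (asc_chain' (by omega))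
    (asc_nodup (by omega)) (asc_nodup (by omega))
    (fun x hx => asc_not_S hx) (fun x hx => asc_not_S hx)
    (by
      intro x hx hx2
      obtain ⟨k, hk1, hk2, rfl⟩ := mem_asc hx
      obtain ⟨l, hl1, hl2, he⟩ := mem_asc hx2
      have := vf_inj (by omega) (by omega) he
      omega)
    (by
      rw [asc_getLast? (by omega), hhead]
      intro x hx y hy; simp at hx hy; subst hx; subst hy
      first
        | exact hadj'.symm
        | (convert hadj'.symm using 2; omega))
    (by
      rw [hlast, asc_head? (by omega)]
      intro x hx y hy; simp at hx hy; subst hx; subst hy; exact hadj)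
  -- X2 : v_0..v_u' ++ L ++ (v_u down to v_{u'+1})
  have hX2 := sandwich (Pre := C.asc 0 (u' + 1)) (Post := (C.asc (u' + 1) (u - u')).reverse)
    hL hLne
    (asc_chain' (by omega)) (chain'_adj_reverse (asc_chain' (by omega)))
    (asc_nodup (by omega)) (List.nodup_reverse.2 (asc_nodup (by omega)))
    (fun x hx => asc_not_S hx) (fun x hx => asc_not_S (List.mem_reverse.1 hx))
    (by
      intro x hx hx2
      rw [List.mem_reverse] at hx2
      obtain ⟨k, hk1, hk2, rfl⟩ := mem_asc hx
      obtain ⟨l, hl1, hl2, he⟩ := mem_asc hx2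
      have := vf_inj (by omega) (by omega) he
      omega)
    (by
      rw [asc_getLast? (by omega), hhead]
      intro x hx y hy; simp at hx hy; subst hx; subst hy
      first
        | exact hadj'.symm
        | (convert hadj'.symm using 2; omega))
    (by
      rw [hlast, asc_rev_head? (by omega)]
      intro x hx y hy; simp at hx hy; subst hx; subst hy
      first
        | exact hadj
        | (convert hadj using 2; omega))
  -- X3 : (v_{u-1} down to v_{u'}) ++ L ++ v_u..v_8
  have hX3 := sandwich (Pre := (C.asc u' (u - u')).reverse) (Post := C.asc u (9 - u)) hL hLne
    (chain'_adj_reverse (asc_chain' (by omega))) (asc_chain' (by omega))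
    (List.nodup_reverse.2 (asc_nodup (by omega))) (asc_nodup (by omega))
    (fun x hx => asc_not_S (List.mem_reverse.1 hx)) (fun x hx => asc_not_S hx)
    (by
      intro x hx hx2
      rw [List.mem_reverse] at hx
      obtain ⟨k, hk1, hk2, rfl⟩ := mem_asc hx
      obtain ⟨l, hl1, hl2, he⟩ := mem_asc hx2
      have := vf_inj (by omega) (by omega) he
      omega)
    (by
      rw [asc_rev_getLast? (by omega), hhead]
      intro x hx y hy; simp at hx hy; subst hx; subst hy
      exact hadj'.symm)
    (by
      rw [hlast, asc_head? (by omega)]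
      intro x hx y hy; simp at hx hy; subst hx; subst hy; exact hadj)
  simp [asc_length, List.length_reverse] at hX1 hX2 hX3
  omega

/-- Lemma (B): a `D`-path whose two endpoints are attached to distinct path vertices
has at most 2 vertices. -/
lemma lemB {L : List V} {z z' : V} {u u' : ℕ} (hL : C.DP L) (hhead : L.head? = some z')
    (hlast : L.getLast? = some z) (h1 : C.Att z' u') (h2 : C.Att z u) (hne : u' ≠ u) :
    L.length ≤ 2 := by
  rcases Nat.lt_or_ge u' u with h | h
  · exact lemB' hL hhead hlast h1 h2 h
  · have h' : u < u' := by omega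
    have := lemB' (DP.reverse hL) (by rw [List.head?_reverse]; exact hlast)
      (by rw [List.getLast?_reverse]; exact hhead) h2 h1 h'
    simpa using this


section Split

/-- split a list at the first element satisfying `P`. -/
lemma split_first {P : V → Prop} (L : List V) (h : ∃ x ∈ L, P x) :
    ∃ L1 m L2, L = L1 ++ m :: L2 ∧ P m ∧ ∀ x ∈ L1, ¬ P x := by
  classical
  induction L with
  | nil => simp at h
  | cons a t ih =>
    by_cases hPa : P a
    · exact ⟨[], a, t, by simp, hPa, by simp⟩
    · have h' : ∃ x ∈ t, P x := by
        obtain ⟨x, hx, hpx⟩ := h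
        rcases List.mem_cons.1 hx with rfl | hx
        · exact absurd hpx hPa
        · exact ⟨x, hx, hpx⟩
      obtain ⟨L1, m, L2, heq, hm, hL1⟩ := ih h'
      refine ⟨a :: L1, m, L2, by simp [heq], hm, ?_⟩
      intro x hx
      rcases List.mem_cons.1 hx with rfl | hx
      · exact hPa
      · exact hL1 x hx

lemma DP.infix {L L' : List V} (h : C.DP L) (h' : L' <:+: L) : C.DP L' :=
  ⟨h.1.infix h', h.2.1.sublist h'.sublist, fun x hx => h.2.2 x (h'.sublist.mem hx)⟩

/-- the prefix `L1 ++ [m]` of `L = L1 ++ m :: L2`. -/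
lemma prefix_facts {L L1 L2 : List V} {m : V} (hL : C.DP L) (heq : L = L1 ++ m :: L2) :
    C.DP (L1 ++ [m]) ∧ (L1 ++ [m]).head? = L.head? ∧ (L1 ++ [m]).getLast? = some m := by
  have hpre : (L1 ++ [m]) <+: L := ⟨L2, by simp [heq]⟩
  refine ⟨DP.infix hL hpre.isInfix, ?_, List.getLast?_concat⟩
  · rw [heq, List.head?_append, List.head?_append]
    rfl
  
/-- the suffix `m :: L2` of `L = L1 ++ m :: L2`. -/
lemma suffix_facts {L L1 L2 : List V} {m : V} (hL : C.DP L) (heq : L = L1 ++ m :: L2) :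
    C.DP (m :: L2) ∧ (m :: L2).head? = some m ∧ (m :: L2).getLast? = L.getLast? ∧
      ∀ x ∈ L1, x ∉ m :: L2 := by
  have hsuf : (m :: L2) <:+ L := ⟨L1, by simp [heq]⟩
  refine ⟨DP.infix hL hsuf.isInfix, rfl, ?_, ?_⟩
  · rw [heq, List.getLast?_append]; rfl
  · intro x hx hx2
    have := hL.2.1
    rw [heq, List.nodup_append] at this
    exact this.2.2 x hx x hx2 rfl

end Split

section Walks

lemma walk_support_getLast? {W' : Type*} {G' : SimpleGraph W'} {x y : W'}
    (w : G'.Walk x y) : w.support.getLast? = some y := by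
  induction w with
  | nil => rfl
  | cons h p ih =>
    rw [SimpleGraph.Walk.support_cons]
    rw [SimpleGraph.Walk.support_eq_cons p] at ih ⊢
    rw [List.getLast?_cons_cons]
    exact ih

lemma induce_adj {s : Set V} {x y : ↥s} (h : (C.G.induce s).Adj x y) :
    C.G.Adj x.val y.val := h

lemma adj_induce {s : Set V} {x y : ↥s} (h : C.G.Adj x.val y.val) :
    (C.G.induce s).Adj x y := h

/-- extract a vertex list from a walk in an induced subgraph -/
lemma walk_list {s : Set V} {x y : ↥s} (w : (C.G.induce s).Walk x y) :
    ∃ L : List V, L.Chain' C.G.Adj ∧ L.Nodup ∧ L.head? = some x.val ∧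
      L.getLast? = some y.val ∧ ∀ v ∈ L, v ∈ s := by
  classical
  obtain ⟨p, hp⟩ := w.toPath
  refine ⟨p.support.map Subtype.val, ?_, ?_, ?_, ?_, ?_⟩
  · rw [List.Chain', List.isChain_map]
    exact (p.isChain_adj_support).imp (fun a b hab => induce_adj hab)
  · exact (hp.support_nodup).map Subtype.val_injective
  · rw [SimpleGraph.Walk.support_eq_cons p]; rfl
  · rw [List.getLast?_map, walk_support_getLast? p]; rfl
  · intro v hv
    obtain ⟨⟨v', hv'⟩, _, rfl⟩ := List.mem_map.1 hv
    exact hv'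

/-- basic escape lemma: from any `c ∈ S`, avoiding any single other vertex `z`,
there is a `D`-path to a vertex attached to the path, whose attachment differs
from `z`. -/
lemma escape0 (z : V) {c : V} (hc : c ∈ C.S) (hcz : c ≠ z) :
    ∃ (L : List V) (w : V) (u : ℕ), C.DP L ∧ L.head? = some c ∧ L.getLast? = some w ∧
      C.Att w u ∧ z ∉ L ∧ C.vf u ≠ z := by
  classical
  -- choose a target on the path different from z
  obtain ⟨t0, ht0, ht0z⟩ : ∃ t0 : V, (∃ k ≤ 8, t0 = C.vf k) ∧ t0 ≠ z := by
    by_cases h0 : C.vf 0 = z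
    · refine ⟨C.vf 1, ⟨1, by omega, rfl⟩, ?_⟩
      rw [← h0]; intro h; exact absurd (vf_inj (by omega) (by omega) h) (by omega)
    · exact ⟨C.vf 0, ⟨0, by omega, rfl⟩, h0⟩
  have hreach := (C.conn2 z).preconnected ⟨c, hcz⟩ ⟨t0, ht0z⟩
  obtain ⟨w0⟩ := hreach
  obtain ⟨L0, hc0, hn0, hh0, hl0, hmem0⟩ := walk_list w0
  -- L0 : list from c to t0, avoiding z
  -- find the first vertex not in S
  have hex : ∃ x ∈ L0, x ∉ C.S := by
    refine ⟨t0, last_mem_of_getLast? hl0, ?_⟩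
    obtain ⟨k, hk, rfl⟩ := ht0
    exact vf_not_S k
  obtain ⟨L1, m, L2, heq, hm, hL1⟩ := split_first L0 hex
  -- L1 is entirely inside S, and ends adjacent to m = f u
  have hL1S : ∀ x ∈ L1, x ∈ C.S := by
    intro x hx
    by_contra hxS
    exact hL1 x hx hxS
  have hL1ne : L1 ≠ [] := by
    rintro rfl
    rw [heq] at hh0; simp at hh0
    subst hh0; exact hm hc
  obtain ⟨w, hw⟩ : ∃ w, L1.getLast? = some w := by
    cases L1 with
    | nil => exact absurd rfl hL1ne
    | cons a t => exact ⟨(a :: t).getLast (by simp), List.getLast?_eq_getLast (by simp)⟩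
  -- m is a path vertex
  have hmf : ∃ u ≤ 8, m = C.vf u := by
    have : m ∈ Set.range C.f := by
      by_contra hmr
      exact hm hmr
    obtain ⟨i, hi⟩ := this
    refine ⟨i.val, by omega, ?_⟩
    rw [vf_eq (by omega), ← hi]
  obtain ⟨u, hu, rfl⟩ := hmf
  -- adjacency of w to m from the chain
  have hadj : C.G.Adj w (C.vf u) := by
    have hch : (L1 ++ (C.vf u) :: L2).Chain' C.G.Adj := heq ▸ hc0
    rw [List.Chain', List.isChain_append] at hch
    exact hch.2.2 w (by rw [hw]; rfl) (C.vf u) rfl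
  have hDP1 : C.DP L1 := by
    refine ⟨?_, ?_, hL1S⟩
    · exact hc0.prefix (heq ▸ ⟨(C.vf u) :: L2, rfl⟩)
    · exact hn0.sublist (heq ▸ (List.sublist_append_left L1 _).trans (by rfl))
  refine ⟨L1, w, u, hDP1, ?_, hw, ⟨hu, hadj⟩, ?_, ?_⟩
  · rw [heq, List.head?_append] at hh0
    cases hL1h : L1.head? with
    | none => rw [List.head?_eq_none_iff] at hL1h; exact absurd hL1h hL1ne
    | some a => rw [hL1h] at hh0; simp at hh0 ⊢; exact hh0
  · intro hzL
    have : z ∈ L0 := heq ▸ List.mem_append.2 (Or.inl hzL)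
    exact (hmem0 z this) rfl
  · have : C.vf u ∈ L0 := heq ▸ List.mem_append.2 (Or.inr (by simp))
    exact hmem0 _ this

end Walks


section Helpers

variable (C)

/-- "attached only at `w`": every attached member of `L` is `w`. -/
def Ctx.AOL (L : List V) (w : V) : Prop := ∀ x ∈ L, ∀ u, C.Att x u → x = w

variable {C}

lemma not_mem_of_AOL {L : List V} {w x : V} {u : ℕ} (h : C.AOL L w) (hatt : C.Att x u)
    (hxw : x ≠ w) : x ∉ L := fun hx => hxw (h x hx u hatt)

lemma getLast?_cons_of_getLast? {L : List V} {x z : V} (h : L.getLast? = some z) :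
    (x :: L).getLast? = some z := by
  cases L with
  | nil => simp at h
  | cons a t => rw [List.getLast?_cons_cons]; exact h

lemma DP.cons {L : List V} {x h' : V} (hL : C.DP L) (hh : L.head? = some h')
    (hadj : C.G.Adj x h') (hxS : x ∈ C.S) (hx : x ∉ L) : C.DP (x :: L) := by
  refine ⟨List.isChain_cons.2 ⟨?_, hL.1⟩, List.nodup_cons.2 ⟨hx, hL.2.1⟩, ?_⟩
  · intro y hy; rw [hh] at hy; simp at hy; subst hy; exact hadj
  · intro v hv
    rcases List.mem_cons.1 hv with rfl | hv
    · exact hxS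
    · exact hL.2.2 v hv

lemma DP.concat {L : List V} {y z : V} (hL : C.DP L) (hl : L.getLast? = some z)
    (hadj : C.G.Adj z y) (hyS : y ∈ C.S) (hy : y ∉ L) : C.DP (L ++ [y]) := by
  refine ⟨?_, ?_, ?_⟩
  · rw [List.Chain', List.isChain_append]
    refine ⟨hL.1, List.isChain_singleton y, ?_⟩
    intro a ha b hb
    rw [hl] at ha; simp at ha hb; subst ha; subst hb; exact hadj
  · rw [List.nodup_append]
    exact ⟨hL.2.1, List.nodup_singleton y, by intro a ha b hb hab; simp at hb; subst hb; subst hab; exact hy ha⟩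
  · intro v hv
    rcases List.mem_append.1 hv with hv | hv
    · exact hL.2.2 v hv
    · simp at hv; subst hv; exact hyS

lemma head?_concat {L : List V} {y c : V} (hh : L.head? = some c) :
    (L ++ [y]).head? = some c := by
  rw [List.head?_append, hh]; rfl

lemma head?_of_cons {L : List V} {x : V} : (x :: L).head? = some x := rfl

/-- full escape lemma: reach an attached vertex, avoiding `z`, with unattached interior. -/
lemma escape' (z : V) {c : V} (hc : c ∈ C.S) (hcz : c ≠ z) :
    ∃ (L : List V) (w : V) (u : ℕ), C.DP L ∧ L.head? = some c ∧ L.getLast? = some w ∧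
      C.Att w u ∧ z ∉ L ∧ C.AOL L w := by
  obtain ⟨L, w, u, hDP, hh, hl, hatt, hz, _⟩ := escape0 z hc hcz
  have hex : ∃ x ∈ L, ∃ u', C.Att x u' := ⟨w, last_mem_of_getLast? hl, u, hatt⟩
  obtain ⟨L1, m, L2, heq, hm, hL1⟩ := split_first L hex
  obtain ⟨hDP', hh', hl'⟩ := prefix_facts hDP heq
  obtain ⟨u', hmu'⟩ := hm
  refine ⟨L1 ++ [m], m, u', hDP', by rw [hh', hh], hl', hmu', ?_, ?_⟩
  · intro hz'
    apply hz
    rw [heq]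
    rcases List.mem_append.1 hz' with h | h
    · exact List.mem_append.2 (Or.inl h)
    · simp at h; subst h; exact List.mem_append.2 (Or.inr (by simp))
  · intro x hx u'' hatt''
    rcases List.mem_append.1 hx with h | h
    · exact absurd ⟨u'', hatt''⟩ (hL1 x h)
    · simpa using h

/-- convert reachability inside `S` to a `D`-path. -/
lemma reach_toDP {x y : V} (hx : x ∈ C.S) (hy : y ∈ C.S)
    (h : (C.G.induce C.S).Reachable ⟨x, hx⟩ ⟨y, hy⟩) :
    ∃ L, C.DP L ∧ L.head? = some x ∧ L.getLast? = some y := by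
  obtain ⟨w⟩ := h
  obtain ⟨L, hc, hn, hh, hl, hmem⟩ := walk_list w
  exact ⟨L, ⟨hc, hn, hmem⟩, hh, hl⟩

/-- every vertex on a `D`-path is reachable (inside `S`) from its head. -/
lemma DP_reach : ∀ {L : List V}, C.DP L → ∀ {c : V}, L.head? = some c → ∀ (hcS : c ∈ C.S)
    (x : V), x ∈ L → ∃ hxS : x ∈ C.S, (C.G.induce C.S).Reachable ⟨c, hcS⟩ ⟨x, hxS⟩ := by
  intro L
  induction L with
  | nil => intro _ c hc; simp at hc
  | cons a t ih =>
    intro hL c hc hcS x hx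
    simp at hc; subst hc
    rcases List.mem_cons.1 hx with rfl | hx
    · exact ⟨hcS, by rfl⟩
    · obtain ⟨b, hb⟩ : ∃ b, t.head? = some b := by
        cases t with
        | nil => simp at hx
        | cons e t' => exact ⟨e, rfl⟩
      have htDP : C.DP t := ⟨(List.isChain_cons.1 hL.1).2, (List.nodup_cons.1 hL.2.1).2,
        fun v hv => hL.2.2 v (List.mem_cons_of_mem _ hv)⟩
      have hbS : b ∈ C.S := htDP.2.2 b (head_mem_of_head? hb)
      have hadj : C.G.Adj a b := (List.isChain_cons.1 hL.1).1 b hb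
      obtain ⟨hxS, hr⟩ := ih htDP hb hbS x hx
      exact ⟨hxS, SimpleGraph.Reachable.trans
        (SimpleGraph.Adj.reachable (adj_induce hadj)) hr⟩

end Helpers


section Core

variable {D : Set V}

/-- helper: a 3-vertex path with differently attached endpoints is impossible. -/
lemma listB3 {x y z : V} {u' u : ℕ} (hxy : C.G.Adj x y) (hyz : C.G.Adj y z) (hxz : x ≠ z)
    (hxS : x ∈ C.S) (hyS : y ∈ C.S) (hzS : z ∈ C.S)
    (h1 : C.Att x u') (h2 : C.Att z u) (hne : u' ≠ u) : False := by
  have hDP : C.DP [x, y, z] := by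
    refine ⟨?_, ?_, ?_⟩
    · simp [List.Chain', List.isChain_cons_cons]; exact ⟨hxy, hyz⟩
    · simp [hxy.ne, hyz.ne, hxz]
    · intro v hv; simp at hv; rcases hv with rfl | rfl | rfl <;> assumption
  have := lemB hDP rfl rfl h1 h2 hne
  simp at this

/-- helper: a 4-vertex path with differently attached endpoints is impossible. -/
lemma listB4 {x y z w : V} {u' u : ℕ} (hxy : C.G.Adj x y) (hyz : C.G.Adj y z)
    (hzw : C.G.Adj z w) (hxz : x ≠ z) (hyw : y ≠ w) (hxw : x ≠ w)
    (hxS : x ∈ C.S) (hyS : y ∈ C.S) (hzS : z ∈ C.S) (hwS : w ∈ C.S)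
    (h1 : C.Att x u') (h2 : C.Att w u) (hne : u' ≠ u) : False := by
  have hDP : C.DP [x, y, z, w] := by
    refine ⟨?_, ?_, ?_⟩
    · simp [List.Chain', List.isChain_cons_cons]; exact ⟨hxy, hyz, hzw⟩
    · simp [hxy.ne, hyz.ne, hzw.ne, hxz, hyw, hxw]
    · intro v hv; simp at hv; rcases hv with rfl | rfl | rfl | rfl <;> assumption
  have := lemB hDP rfl rfl h1 h2 hne
  simp at this

/-- choose an attachment index of `z` different from `u`. -/
lemma pick_ne {z : V} {p q u : ℕ} (hp : C.Att z p) (hq : C.Att z q) (hpq : p ≠ q) :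
    ∃ r, C.Att z r ∧ r ≠ u := by
  by_cases h : p = u
  · exact ⟨q, hq, by omega⟩
  · exact ⟨p, hp, h⟩

lemma lemCaseA2 {z c d : V} {p q : ℕ}
    (hp : C.Att z p) (hq : C.Att z q) (hpq : p ≠ q)
    (hcd : C.G.Adj c d) (hcz : c ≠ z) (hdz : d ≠ z)
    (hzS : z ∈ C.S) (hcS : c ∈ C.S) (hdS : d ∈ C.S)
    (π : List V) (hπ : C.DP π) (hπh : π.head? = some z) (hπl : π.getLast? = some c)
    (hdπ : d ∉ π) : False := by
  -- first: get Adj z c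
  have hX : C.DP (d :: π.reverse) := by
    refine DP.cons (DP.reverse hπ) ?_ hcd.symm hdS ?_
    · rw [List.head?_reverse]; exact hπl
    · rw [List.mem_reverse]; exact hdπ
  have hXl : (d :: π.reverse).getLast? = some z := by
    apply getLast?_cons_of_getLast?
    rw [List.getLast?_reverse]; exact hπh
  have hA1 := lemA hX hXl hp
  have hA2 := lemA hX hXl hq
  have hπ2 : 2 ≤ π.length := length_two_of_ne hπh hπl (Ne.symm hcz)
  have hXlen : (d :: π.reverse).length = π.length + 1 := by simp
  have hπlen : π.length = 2 := by
    obtain ⟨hu1, _⟩ := hp; obtain ⟨hu2, _⟩ := hq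
    omega
  have hzc : C.G.Adj z c := by
    have heq := list_eq_pair hπlen hπh hπl
    rw [heq] at hπ
    exact (List.isChain_cons_cons.1 hπ.1).1
  -- escape from c avoiding z
  obtain ⟨L, w, u, hL, hLh, hLl, hatt, hzL, hAOL⟩ := escape' z hcS hcz
  obtain ⟨r, hr, hru⟩ := pick_ne hp hq hpq (u := u)
  by_cases hdL : d ∈ L
  · obtain ⟨L1, L2, heq⟩ := List.append_of_mem hdL
    obtain ⟨hσDP, hσh, hσl, hdisj⟩ := suffix_facts hL heq
    have hcL1 : c ∈ L1 := by
      cases L1 with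
      | nil => rw [heq] at hLh; simp at hLh; exact absurd hLh.symm hcd.ne
      | cons a t => rw [heq] at hLh; simp at hLh; exact List.mem_cons.2 (Or.inl hLh.symm)
    have hcσ : c ∉ d :: L2 := hdisj c hcL1
    have hzσ : z ∉ d :: L2 := fun h => hzL (heq ▸ List.mem_append.2 (Or.inr h))
    have hX2 : C.DP (z :: c :: d :: L2) := by
      refine DP.cons ?_ rfl hzc hzS ?_
      · exact DP.cons hσDP hσh hcd hcS hcσ
      · intro h
        rcases List.mem_cons.1 h with h | h
        · exact hcz h.symm
        · exact hzσ h
    have hX2l : (z :: c :: d :: L2).getLast? = some w := by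
      apply getLast?_cons_of_getLast?; apply getLast?_cons_of_getLast?
      rw [hσl]; exact hLl
    have := lemB hX2 rfl hX2l hr hatt hru
    simp at this
  · have hX2 : C.DP (z :: L) := DP.cons hL hLh hzc hzS hzL
    have hX2l : (z :: L).getLast? = some w := getLast?_cons_of_getLast? hLl
    have hlen := lemB hX2 rfl hX2l hr hatt hru
    simp at hlen
    have hL1 : L.length = 1 := by
      have := length_pos_of_head? hLh
      omega
    have hwc : w = c := by
      cases L with
      | nil => simp at hLh
      | cons a t =>
        cases t with
        | nil => simp at hLh hLl; rw [← hLh, ← hLl]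
        | cons b t' => simp at hL1
    -- c is attached to u
    have hcatt : C.Att c u := hwc ▸ hatt
    -- escape from d avoiding c
    obtain ⟨L', w', u', hL', hLh', hLl', hatt', hcL', hAOL'⟩ := escape' c hdS hcd.ne.symm
    by_cases hwz : w' = z
    · obtain ⟨r', hr', hru'⟩ := pick_ne hp hq hpq (u := u)
      have hX3 : C.DP (c :: L') := DP.cons hL' hLh' hcd hcS hcL'
      have hX3l : (c :: L').getLast? = some z := getLast?_cons_of_getLast? (hwz ▸ hLl')
      have hlen3 := lemB hX3 rfl hX3l hcatt hr' (fun h => hru' h.symm)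
      have : 2 ≤ L'.length := length_two_of_ne hLh' hLl' (by rw [hwz]; exact hdz)
      simp at hlen3
      omega
    · have hzL' : z ∉ L' := not_mem_of_AOL hAOL' hp (fun h => hwz h.symm)
      have hX4 : C.DP (z :: c :: L') := by
        refine DP.cons ?_ rfl hzc hzS ?_
        · exact DP.cons hL' hLh' hcd hcS hcL'
        · intro h
          rcases List.mem_cons.1 h with h | h
          · exact hcz h.symm
          · exact hzL' h
      have hX4l : (z :: c :: L').getLast? = some w' := by
        apply getLast?_cons_of_getLast?; apply getLast?_cons_of_getLast?; exact hLl'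
      obtain ⟨r', hr', hru'⟩ := pick_ne hp hq hpq (u := u')
      have hlen4 := lemB hX4 rfl hX4l hr' hatt' hru'
      simp only [List.length_cons] at hlen4
      have h1 : 1 ≤ L'.length := length_pos_of_head? hLh'
      omega

lemma lemCaseA
    (hDconn : ∀ c d, c ∈ D → d ∈ D → ∃ L, C.DP L ∧ L.head? = some c ∧ L.getLast? = some d)
    (hDS : D ⊆ C.S)
    {z c d : V} {p q : ℕ}
    (hzD : z ∈ D) (hcD : c ∈ D) (hdD : d ∈ D)
    (hp : C.Att z p) (hq : C.Att z q) (hpq : p ≠ q)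
    (hcd : C.G.Adj c d) (hcz : c ≠ z) (hdz : d ≠ z) : False := by
  obtain ⟨π0, hπ0, hh0, hl0⟩ := hDconn z c hzD hcD
  have hex : ∃ x ∈ π0, x = c ∨ x = d := ⟨c, last_mem_of_getLast? hl0, Or.inl rfl⟩
  obtain ⟨L1, m, L2, heq, hm, hL1⟩ := split_first π0 hex
  obtain ⟨hπDP, hπh, hπl⟩ := prefix_facts hπ0 heq
  rw [hh0] at hπh
  rcases hm with rfl | rfl
  · -- m = c
    have hdπ : d ∉ L1 ++ [m] := by
      intro hx
      rcases List.mem_append.1 hx with h' | h'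
      · exact hL1 d h' (Or.inr rfl)
      · simp at h'; exact hcd.ne h'.symm
    exact lemCaseA2 hp hq hpq hcd hcz hdz (hDS hzD) (hDS hcD) (hDS hdD) _ hπDP hπh hπl hdπ
  · -- m = d
    have hcπ : c ∉ L1 ++ [m] := by
      intro hx
      rcases List.mem_append.1 hx with h' | h'
      · exact hL1 c h' (Or.inl rfl)
      · simp at h'; exact hcd.ne h'
    exact lemCaseA2 hp hq hpq hcd.symm hdz hcz (hDS hzD) (hDS hdD) (hDS hcD) _ hπDP hπh hπl hcπ


lemma list_len1 {L : List V} {x y : V} (hlen : L.length = 1) (hh : L.head? = some x)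
    (hl : L.getLast? = some y) : x = y := by
  cases L with
  | nil => simp at hlen
  | cons a t =>
    cases t with
    | nil => simp at hh hl; rw [← hh, ← hl]
    | cons b t' => simp at hlen

lemma lemBeta
    (hDS : D ⊆ C.S)
    (hDcl : ∀ (L : List V) (c : V), C.DP L → L.head? = some c → c ∈ D → ∀ x ∈ L, x ∈ D)
    (Hs : ∀ x ∈ D, ∀ p q, C.Att x p → C.Att x q → p = q)
    {P Q c d : V} {α : ℕ}
    (hPD : P ∈ D) (hQD : Q ∈ D) (hcD : c ∈ D) (hdD : d ∈ D)
    (hPQ : C.G.Adj P Q) (hPc : C.G.Adj P c) (hcd : C.G.Adj c d)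
    (hattP : C.Att P α) (hattQ : C.Att Q 4) (hα : α ≠ 4)
    (hcP : c ≠ P) (hcQ : c ≠ Q) (hdP : d ≠ P) (hdQ : d ≠ Q) : False := by
  have hPS := hDS hPD; have hQS := hDS hQD; have hcS := hDS hcD; have hdS := hDS hdD
  have hα8 : α ≤ 8 := hattP.1
  by_cases hadjcQ : C.G.Adj c Q
  · exact listB3 hPc hadjcQ hPQ.ne hPS hcS hQS hattP hattQ hα
  obtain ⟨L, w, u, hL, hLh, hLl, hattw, hdL, hAOL⟩ := escape' d hcS hcd.ne
  have hwS : w ∈ C.S := hL.2.2 w (last_mem_of_getLast? hLl)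
  have hwD : w ∈ D := hDcl L c hL hLh hcD w (last_mem_of_getLast? hLl)
  by_cases hwP : w = P
  · -- L : c → P avoiding d
    obtain ⟨L', w', u', hL', hLh', hLl', hattw', hcL', hAOL'⟩ := escape' c hdS hcd.ne.symm
    have hw'S : w' ∈ C.S := hL'.2.2 w' (last_mem_of_getLast? hLl')
    have hw'D : w' ∈ D := hDcl L' d hL' hLh' hdD w' (last_mem_of_getLast? hLl')
    by_cases hw'P : w' = P
    · -- X := (c :: L') ++ [Q]
      have hQL' : Q ∉ L' := not_mem_of_AOL hAOL' hattQ (by rw [hw'P]; exact hPQ.ne.symm)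
      have hDPX : C.DP ((c :: L') ++ [Q]) := by
        refine DP.concat (z := w') (DP.cons hL' hLh' hcd hcS hcL')
          (getLast?_cons_of_getLast? hLl') (by rw [hw'P]; exact hPQ) hQS ?_
        intro h; rcases List.mem_cons.1 h with h | h
        · exact hcQ h.symm
        · exact hQL' h
      have hA := lemA hDPX (List.getLast?_concat) hattQ
      have hlen2 : 2 ≤ L'.length := length_two_of_ne hLh' hLl' (by rw [hw'P]; exact hdP)
      simp only [List.length_cons, List.length_append, List.length_nil, List.length_singleton] at hA
      have hL'len : L'.length = 2 := by omega
      have heqL' : L' = [d, P] := by rw [← hw'P]; exact list_eq_pair hL'len hLh' hLl'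
      have hdPadj : C.G.Adj d P := by
        have := hL'.1; rw [heqL'] at this; exact (List.isChain_cons_cons.1 this).1
      by_cases hadjdQ : C.G.Adj d Q
      · exact listB3 hdPadj.symm hadjdQ hPQ.ne hPS hdS hQS hattP hattQ hα
      -- c and d are unattached
      have hcU : ∀ u0, ¬ C.Att c u0 := by
        intro u0 hattc
        by_cases h4 : u0 = 4
        · exact listB3 hcd hdPadj hcP hcS hdS hPS (h4 ▸ hattc) hattP (fun h => hα h.symm)
        · exact listB3 hPQ.symm hPc hcQ.symm hQS hPS hcS hattQ hattc (fun h => h4 h.symm)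
      have hdU : ∀ u0, ¬ C.Att d u0 := by
        intro u0 hattd
        by_cases h4 : u0 = 4
        · exact listB3 hcd.symm hPc.symm hdP hdS hcS hPS (h4 ▸ hattd) hattP (fun h => hα h.symm)
        · exact listB3 hPQ.symm hdPadj.symm hdQ.symm hQS hPS hdS hattQ hattd (fun h => h4 h.symm)
      -- escape from d avoiding P
      obtain ⟨L₂, w₂, u₂, hL₂, hL₂h, hL₂l, hattw₂, hPL₂, hAOL₂⟩ := escape' P hdS hdP
      have hw₂S : w₂ ∈ C.S := hL₂.2.2 w₂ (last_mem_of_getLast? hL₂l)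
      have hw₂D : w₂ ∈ D := hDcl L₂ d hL₂ hL₂h hdD w₂ (last_mem_of_getLast? hL₂l)
      have hw₂P : w₂ ≠ P := fun h => hPL₂ (h ▸ last_mem_of_getLast? hL₂l)
      have hdw₂ : d ≠ w₂ := fun h => hdU u₂ (h ▸ hattw₂)
      by_cases hw₂Q : w₂ = Q
      · by_cases hcL₂ : c ∈ L₂
        · obtain ⟨A, B, heq⟩ := List.append_of_mem hcL₂
          obtain ⟨hσDP, hσh, hσl, hdisj⟩ := suffix_facts hL₂ heq
          have hPσ : P ∉ c :: B := fun h => hPL₂ (heq ▸ List.mem_append.2 (Or.inr h))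
          have hX : C.DP (P :: c :: B) := DP.cons hσDP hσh hPc hPS hPσ
          have hXl : (P :: c :: B).getLast? = some w₂ :=
            getLast?_cons_of_getLast? (by rw [hσl]; exact hL₂l)
          have hcw₂ : c ≠ w₂ := fun h => hcU u₂ (h ▸ hattw₂)
          have hlen := lemB hX rfl hXl hattP (hw₂Q ▸ hattQ : C.Att w₂ 4) hα
          have h2 : 2 ≤ (c :: B).length := length_two_of_ne hσh (by rw [hσl]; exact hL₂l) hcw₂
          simp only [List.length_cons, List.length_append, List.length_nil, List.length_singleton] at hlen h2
          omega
        · have hX : C.DP (P :: c :: L₂) := by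
            refine DP.cons (DP.cons hL₂ hL₂h hcd hcS hcL₂) rfl hPc hPS ?_
            intro h; rcases List.mem_cons.1 h with h | h
            · exact hcP h.symm
            · exact hPL₂ h
          have hXl : (P :: c :: L₂).getLast? = some w₂ := by
            apply getLast?_cons_of_getLast?; exact getLast?_cons_of_getLast? hL₂l
          have hlen := lemB hX rfl hXl hattP (hw₂Q ▸ hattQ : C.Att w₂ 4) hα
          have h1 : 1 ≤ L₂.length := length_pos_of_head? hL₂h
          simp only [List.length_cons, List.length_append, List.length_nil, List.length_singleton] at hlen
          omega
      · have hQL₂ : Q ∉ L₂ := not_mem_of_AOL hAOL₂ hattQ (fun h => hw₂Q h.symm)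
        by_cases hcL₂ : c ∈ L₂
        · obtain ⟨A, B, heq⟩ := List.append_of_mem hcL₂
          obtain ⟨hσDP, hσh, hσl, hdisj⟩ := suffix_facts hL₂ heq
          have hPσ : P ∉ c :: B := fun h => hPL₂ (heq ▸ List.mem_append.2 (Or.inr h))
          have hX : C.DP (P :: c :: B) := DP.cons hσDP hσh hPc hPS hPσ
          have hXl : (P :: c :: B).getLast? = some w₂ :=
            getLast?_cons_of_getLast? (by rw [hσl]; exact hL₂l)
          have hcw₂ : c ≠ w₂ := fun h => hcU u₂ (h ▸ hattw₂)
          have h2 : 2 ≤ (c :: B).length := length_two_of_ne hσh (by rw [hσl]; exact hL₂l) hcw₂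
          simp only [List.length_cons] at h2
          by_cases hu₂ : u₂ = α
          · have hA := lemA hX hXl hattw₂
            simp only [List.length_cons, List.length_append, List.length_nil, List.length_singleton] at hA
            have hBlen : (c :: B).length = 2 := by simp only [List.length_cons]; omega
            have heqσ : c :: B = [c, w₂] := list_eq_pair hBlen hσh (by rw [hσl]; exact hL₂l)
            have hcw₂adj : C.G.Adj c w₂ := by
              have := hσDP.1; rw [heqσ] at this; exact (List.isChain_cons_cons.1 this).1
            have hw₂Q' : Q ≠ w₂ := by
              intro h
              exact hα (Hs Q hQD α 4 (h ▸ hu₂ ▸ hattw₂) hattQ)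
            exact listB4 hPQ.symm hPc hcw₂adj hcQ.symm (fun h => hw₂P h.symm) hw₂Q'
              hQS hPS hcS hw₂S hattQ (hu₂ ▸ hattw₂) (fun h => hα h.symm)
          · have hlen := lemB hX rfl hXl hattP hattw₂ (fun h => hu₂ h.symm)
            simp only [List.length_cons, List.length_append, List.length_nil, List.length_singleton] at hlen
            omega
        · have hX : C.DP (Q :: P :: L₂) := by
            refine DP.cons (DP.cons hL₂ hL₂h hdPadj.symm hPS hPL₂) rfl hPQ.symm hQS ?_
            intro h; rcases List.mem_cons.1 h with h | h
            · exact hPQ.ne h.symm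
            · exact hQL₂ h
          have hXl : (Q :: P :: L₂).getLast? = some w₂ := by
            apply getLast?_cons_of_getLast?; exact getLast?_cons_of_getLast? hL₂l
          have h2 : 2 ≤ L₂.length := length_two_of_ne hL₂h hL₂l hdw₂
          by_cases hu₂ : u₂ = 4
          · have hA := lemA hX hXl hattw₂
            simp only [List.length_cons, List.length_append, List.length_nil, List.length_singleton] at hA
            have hL₂len : L₂.length = 2 := by omega
            have heqL₂ : L₂ = [d, w₂] := list_eq_pair hL₂len hL₂h hL₂l
            have hdw₂adj : C.G.Adj d w₂ := by
              have := hL₂.1; rw [heqL₂] at this; exact (List.isChain_cons_cons.1 this).1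
            exact listB3 hdw₂adj.symm hdPadj (fun h => hw₂P h) hw₂S hdS hPS
              (hu₂ ▸ hattw₂) hattP (by omega)
          · have hlen := lemB hX rfl hXl hattQ hattw₂ (fun h => hu₂ h.symm)
            simp only [List.length_cons, List.length_append, List.length_nil, List.length_singleton] at hlen
            omega
    · -- w' ≠ P
      have hPL' : P ∉ L' := not_mem_of_AOL hAOL' hattP (fun h => hw'P h.symm)
      have hX : C.DP (P :: c :: L') := by
        refine DP.cons (DP.cons hL' hLh' hcd hcS hcL') rfl hPc hPS ?_
        intro h; rcases List.mem_cons.1 h with h | h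
        · exact hcP h.symm
        · exact hPL' h
      have hXl : (P :: c :: L').getLast? = some w' := by
        apply getLast?_cons_of_getLast?; exact getLast?_cons_of_getLast? hLl'
      have h1 : 1 ≤ L'.length := length_pos_of_head? hLh'
      by_cases hw'Q : w' = Q
      · have hlen := lemB hX rfl hXl hattP (hw'Q ▸ hattQ : C.Att w' 4) hα
        simp only [List.length_cons] at hlen
        omega
      · by_cases hu' : u' = α
        · have hA := lemA hX hXl hattw'
          simp only [List.length_cons] at hA
          have hL'len : L'.length = 1 := by omega
          have hw'd : d = w' := list_len1 hL'len hLh' hLl'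
          have hdatt : C.Att d α := hw'd ▸ (hu' ▸ hattw')
          exact listB4 hPQ.symm hPc hcd hcQ.symm (fun h => hdP h.symm) (fun h => hdQ h.symm)
            hQS hPS hcS hdS hattQ hdatt (fun h => hα h.symm)
        · have hlen := lemB hX rfl hXl hattP hattw' (fun h => hu' h.symm)
          simp only [List.length_cons] at hlen
          omega
  · -- w ≠ P
    by_cases hwQ : w = Q
    · have hPL : P ∉ L := not_mem_of_AOL hAOL hattP (fun h => hwP h.symm)
      have hX : C.DP (P :: L) := DP.cons hL hLh hPc hPS hPL
      have hXl : (P :: L).getLast? = some w := getLast?_cons_of_getLast? hLl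
      have hlen := lemB hX rfl hXl hattP (hwQ ▸ hattQ : C.Att w 4) hα
      have h2 : 2 ≤ L.length := length_two_of_ne hLh hLl (by rw [hwQ]; exact hcQ)
      simp only [List.length_cons] at hlen
      omega
    · by_cases hwc : w = c
      · have hcatt : C.Att c u := hwc ▸ hattw
        by_cases hu4 : u = 4
        · -- c is attached to v₄; escape from d avoiding c
          obtain ⟨L₃, w₃, u₃, hL₃, hL₃h, hL₃l, hattw₃, hcL₃, hAOL₃⟩ := escape' c hdS hcd.ne.symm
          have hw₃S : w₃ ∈ C.S := hL₃.2.2 w₃ (last_mem_of_getLast? hL₃l)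
          by_cases hw₃P : w₃ = P
          · have hQL₃ : Q ∉ L₃ := not_mem_of_AOL hAOL₃ hattQ (by rw [hw₃P]; exact hPQ.ne.symm)
            have hX : C.DP ((c :: L₃) ++ [Q]) := by
              refine DP.concat (z := w₃) (DP.cons hL₃ hL₃h hcd hcS hcL₃)
                (getLast?_cons_of_getLast? hL₃l) (by rw [hw₃P]; exact hPQ) hQS ?_
              intro h; rcases List.mem_cons.1 h with h | h
              · exact hcQ h.symm
              · exact hQL₃ h
            have hA := lemA hX (List.getLast?_concat) hattQ
            have h2 : 2 ≤ L₃.length := length_two_of_ne hL₃h hL₃l (by rw [hw₃P]; exact hdP)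
            simp only [List.length_cons, List.length_append, List.length_singleton] at hA
            have hL₃len : L₃.length = 2 := by omega
            have heqL₃ : L₃ = [d, P] := by rw [← hw₃P]; exact list_eq_pair hL₃len hL₃h hL₃l
            have hdPadj : C.G.Adj d P := by
              have := hL₃.1; rw [heqL₃] at this; exact (List.isChain_cons_cons.1 this).1
            exact listB3 hcd hdPadj hcP hcS hdS hPS (hu4 ▸ hcatt) hattP (fun h => hα h.symm)
          · have hPL₃ : P ∉ L₃ := not_mem_of_AOL hAOL₃ hattP (fun h => hw₃P h.symm)
            have hX : C.DP (P :: c :: L₃) := by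
              refine DP.cons (DP.cons hL₃ hL₃h hcd hcS hcL₃) rfl hPc hPS ?_
              intro h; rcases List.mem_cons.1 h with h | h
              · exact hcP h.symm
              · exact hPL₃ h
            have hXl : (P :: c :: L₃).getLast? = some w₃ := by
              apply getLast?_cons_of_getLast?; exact getLast?_cons_of_getLast? hL₃l
            have h1 : 1 ≤ L₃.length := length_pos_of_head? hL₃h
            by_cases hw₃Q : w₃ = Q
            · have hlen := lemB hX rfl hXl hattP (hw₃Q ▸ hattQ : C.Att w₃ 4) hα
              simp only [List.length_cons] at hlen
              omega
            · by_cases hu₃ : u₃ = α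
              · have hA := lemA hX hXl hattw₃
                simp only [List.length_cons] at hA
                have hL₃len : L₃.length = 1 := by omega
                have hw₃d : d = w₃ := list_len1 hL₃len hL₃h hL₃l
                have hdatt : C.Att d α := hw₃d ▸ (hu₃ ▸ hattw₃)
                exact listB4 hPQ.symm hPc hcd hcQ.symm (fun h => hdP h.symm)
                  (fun h => hdQ h.symm) hQS hPS hcS hdS hattQ hdatt (fun h => hα h.symm)
              · have hlen := lemB hX rfl hXl hattP hattw₃ (fun h => hu₃ h.symm)
                simp only [List.length_cons] at hlen
                omega
        · exact listB3 hPQ.symm hPc hcQ.symm hQS hPS hcS hattQ hcatt (fun h => hu4 h.symm)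
      · -- w ∉ {P, Q, c}
        have hPL : P ∉ L := not_mem_of_AOL hAOL hattP (fun h => hwP h.symm)
        have hQL : Q ∉ L := not_mem_of_AOL hAOL hattQ (fun h => hwQ h.symm)
        have hX : C.DP (Q :: P :: L) := by
          refine DP.cons (DP.cons hL hLh hPc hPS hPL) rfl hPQ.symm hQS ?_
          intro h; rcases List.mem_cons.1 h with h | h
          · exact hPQ.ne h.symm
          · exact hQL h
        have hXl : (Q :: P :: L).getLast? = some w := by
          apply getLast?_cons_of_getLast?; exact getLast?_cons_of_getLast? hLl
        have h2 : 2 ≤ L.length := length_two_of_ne hLh hLl (fun h => hwc h.symm)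
        by_cases hu4 : u = 4
        · have hA := lemA hX hXl hattw
          simp only [List.length_cons] at hA h2
          have hLlen : L.length = 2 := by omega
          have heqL : L = [c, w] := list_eq_pair hLlen hLh hLl
          have hcwadj : C.G.Adj c w := by
            have := hL.1; rw [heqL] at this; exact (List.isChain_cons_cons.1 this).1
          exact listB3 hcwadj.symm hPc.symm (fun h => hwP h) hwS hcS hPS
            (hu4 ▸ hattw) hattP (by omega)
        · have hlen := lemB hX rfl hXl hattQ hattw (fun h => hu4 h.symm)
          simp only [List.length_cons] at hlen
          omega


/-- lemA applied at the head of the list. -/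
lemma lemA_head {L : List V} {z : V} {u : ℕ} (hL : C.DP L) (hhead : L.head? = some z)
    (hatt : C.Att z u) : L.length ≤ u ∧ L.length ≤ 8 - u := by
  have := lemA (DP.reverse hL) (by rw [List.getLast?_reverse]; exact hhead) hatt
  simpa using this

lemma lemS4
    (hDS : D ⊆ C.S)
    {A B yA yB : V} {sa sb : ℕ}
    (hAD : A ∈ D) (hBD : B ∈ D) (hyAD : yA ∈ D) (hyBD : yB ∈ D)
    (hAB : C.G.Adj A B) (hattA : C.Att A sa) (hattB : C.Att B sb) (hsab : sa ≠ sb)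
    (hByB : C.G.Adj B yB) (hAyA : C.G.Adj A yA)
    (hyBA : yB ≠ A) (hyAB : yA ≠ B) (hyy : yA ≠ yB)
    (hattyB : C.Att yB sa)
    (hyAatt : ∀ w, C.Att yA w → w = sb) : False := by
  have hAS := hDS hAD; have hBS := hDS hBD; have hyAS := hDS hyAD; have hyBS := hDS hyBD
  have hsa8 := hattA.1; have hsb8 := hattB.1
  have hX0 : C.DP [yA, A, B, yB] := by
    refine ⟨?_, ?_, ?_⟩
    · simp [List.Chain', List.isChain_cons_cons]; exact ⟨hAyA.symm, hAB, hByB⟩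
    · simp [hAyA.ne', hAB.ne, hByB.ne, hyAB, hyy, Ne.symm hyBA]
    · intro v hv; simp at hv; rcases hv with rfl | rfl | rfl | rfl <;> assumption
  have hX0l : ([yA, A, B, yB] : List V).getLast? = some yB := rfl
  have hA4 := lemA hX0 hX0l hattyB
  simp at hA4
  have hsa4 : sa = 4 := by omega
  by_cases hy2att : ∃ w0, C.Att yA w0
  · obtain ⟨w0, hw0⟩ := hy2att
    have hw0sb : w0 = sb := hyAatt _ hw0
    have := lemB hX0 rfl hX0l (hw0sb ▸ hw0 : C.Att yA sb) hattyB (fun h => hsab h.symm)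
    simp at this
  · push_neg at hy2att
    obtain ⟨L, w, u, hL, hLh, hLl, hattw, hAL, hAOL⟩ := escape' A hyAS hAyA.ne'
    have hwS : w ∈ C.S := hL.2.2 w (last_mem_of_getLast? hLl)
    have hyAw : yA ≠ w := fun h => hy2att u (h ▸ hattw)
    have h2 : 2 ≤ L.length := length_two_of_ne hLh hLl hyAw
    by_cases hwB : w = B
    · have hX : C.DP (A :: L) := DP.cons hL hLh hAyA hAS hAL
      have hXl : (A :: L).getLast? = some w := getLast?_cons_of_getLast? hLl
      have hlen := lemB hX rfl hXl (hsa4 ▸ hattA : C.Att A 4) (hwB ▸ hattB : C.Att w sb)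
        (by omega)
      simp only [List.length_cons] at hlen
      omega
    · by_cases hwyB : w = yB
      · have hBL : B ∉ L := not_mem_of_AOL hAOL hattB (by rw [hwyB]; exact hByB.ne)
        have hX : C.DP ((A :: L) ++ [B]) := by
          refine DP.concat (z := w) (DP.cons hL hLh hAyA hAS hAL)
            (getLast?_cons_of_getLast? hLl) (by rw [hwyB]; exact hByB.symm) hBS ?_
          intro h; rcases List.mem_cons.1 h with h | h
          · exact hAB.ne h.symm
          · exact hBL h
        have hXh : ((A :: L) ++ [B]).head? = some A := rfl
        have hlen := lemB hX hXh (List.getLast?_concat)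
          (hsa4 ▸ hattA : C.Att A 4) hattB (by omega)
        simp only [List.length_cons, List.length_append, List.length_singleton] at hlen
        omega
      · have hBL : B ∉ L := not_mem_of_AOL hAOL hattB (fun h => hwB h.symm)
        have hX : C.DP (B :: A :: L) := by
          refine DP.cons (DP.cons hL hLh hAyA hAS hAL) rfl hAB.symm hBS ?_
          intro h; rcases List.mem_cons.1 h with h | h
          · exact hAB.ne h.symm
          · exact hBL h
        have hXl : (B :: A :: L).getLast? = some w := by
          apply getLast?_cons_of_getLast?; exact getLast?_cons_of_getLast? hLl
        by_cases hut : u = sb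
        · have hA' := lemA hX hXl hattw
          simp only [List.length_cons] at hA'
          omega
        · have hlen := lemB hX rfl hXl hattB hattw (fun h => hut h.symm)
          simp only [List.length_cons] at hlen
          omega

lemma lemS5
    (hDS : D ⊆ C.S)
    {A B yA yB : V} {sa sb : ℕ}
    (hAD : A ∈ D) (hBD : B ∈ D) (hyAD : yA ∈ D) (hyBD : yB ∈ D)
    (hAB : C.G.Adj A B) (hattA : C.Att A sa) (hattB : C.Att B sb) (hsab : sa ≠ sb)
    (hByB : C.G.Adj B yB) (hAyA : C.G.Adj A yA)
    (hyBA : yB ≠ A) (hyAB : yA ≠ B) (hyy : yA ≠ yB)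
    (hyAU : ∀ w, ¬ C.Att yA w) (hyBU : ∀ w, ¬ C.Att yB w) : False := by
  have hAS := hDS hAD; have hBS := hDS hBD; have hyAS := hDS hyAD; have hyBS := hDS hyBD
  have hsa8 := hattA.1; have hsb8 := hattB.1
  obtain ⟨L, w, u, hL, hLh, hLl, hattw, hBL, hAOL⟩ := escape' B hyBS hByB.ne'
  have hwS : w ∈ C.S := hL.2.2 w (last_mem_of_getLast? hLl)
  have hyBw : yB ≠ w := fun h => hyBU u (h ▸ hattw)
  have h2 : 2 ≤ L.length := length_two_of_ne hLh hLl hyBw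
  by_cases hwA : w = A
  · have hX : C.DP (B :: L) := DP.cons hL hLh hByB hBS hBL
    have hXl : (B :: L).getLast? = some w := getLast?_cons_of_getLast? hLl
    have hlen := lemB hX rfl hXl hattB (hwA ▸ hattA : C.Att w sa) (fun h => hsab h.symm)
    simp only [List.length_cons] at hlen
    omega
  · have hAL : A ∉ L := not_mem_of_AOL hAOL hattA (fun h => hwA h.symm)
    by_cases hyAL : yA ∈ L
    · obtain ⟨A1, B1, heq⟩ := List.append_of_mem hyAL
      obtain ⟨hσDP, hσh, hσl, hdisj⟩ := suffix_facts hL heq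
      have hBσ : B ∉ yA :: B1 := fun h => hBL (heq ▸ List.mem_append.2 (Or.inr h))
      have hAσ : A ∉ yA :: B1 := fun h => hAL (heq ▸ List.mem_append.2 (Or.inr h))
      have hX : C.DP (B :: A :: yA :: B1) := by
        refine DP.cons (DP.cons hσDP hσh hAyA hAS hAσ) rfl hAB.symm hBS ?_
        intro h; rcases List.mem_cons.1 h with h | h
        · exact hAB.ne h.symm
        · exact hBσ h
      have hXl : (B :: A :: yA :: B1).getLast? = some w := by
        apply getLast?_cons_of_getLast?; apply getLast?_cons_of_getLast?
        rw [hσl]; exact hLl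
      have hσ2 : 2 ≤ (yA :: B1).length :=
        length_two_of_ne hσh (by rw [hσl]; exact hLl) (fun h => hyAU u (h ▸ hattw))
      by_cases hut : u = sb
      · have hA' := lemA hX hXl hattw
        simp only [List.length_cons] at hA' hσ2
        have hB1len : B1.length = 1 := by omega
        have hsb4 : sb = 4 := by omega
        have heqσ : yA :: B1 = [yA, w] := list_eq_pair (by simp [hB1len]) hσh
          (by rw [hσl]; exact hLl)
        have hyAwadj : C.G.Adj yA w := by
          have := hσDP.1; rw [heqσ] at this; exact (List.isChain_cons_cons.1 this).1
        exact listB3 hyAwadj.symm hAyA.symm (fun h => hwA h) hwS hyAS hAS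
          (hut ▸ hattw : C.Att w sb) hattA (fun h => hsab h.symm)
      · have hlen := lemB hX rfl hXl hattB hattw (fun h => hut h.symm)
        simp only [List.length_cons] at hlen
        omega
    · have hX1 : C.DP (A :: B :: L) := by
        refine DP.cons (DP.cons hL hLh hByB hBS hBL) rfl hAB hAS ?_
        intro h; rcases List.mem_cons.1 h with h | h
        · exact hAB.ne h
        · exact hAL h
      have hX : C.DP (yA :: A :: B :: L) := by
        refine DP.cons hX1 rfl hAyA.symm hyAS ?_
        intro h
        rcases List.mem_cons.1 h with h | h
        · exact hAyA.ne' h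
        rcases List.mem_cons.1 h with h | h
        · exact hyAB h
        · exact hyAL h
      have hXl : (yA :: A :: B :: L).getLast? = some w := by
        apply getLast?_cons_of_getLast?; apply getLast?_cons_of_getLast?
        exact getLast?_cons_of_getLast? hLl
      have hA' := lemA hX hXl hattw
      have hu8 := hattw.1
      simp only [List.length_cons] at hA'
      have hLlen : L.length = 1 := by omega
      have : yB = w := list_len1 hLlen hLh hLl
      exact hyBU u (this ▸ hattw)


lemma lemMissBoth2
    (hDS : D ⊆ C.S)
    (hDcl : ∀ (L : List V) (c : V), C.DP L → L.head? = some c → c ∈ D → ∀ x ∈ L, x ∈ D)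
    (Hs : ∀ x ∈ D, ∀ p q, C.Att x p → C.Att x q → p = q)
    {d0 e0 c' d' : V} {s t : ℕ}
    (hd0D : d0 ∈ D) (he0D : e0 ∈ D) (hcD : c' ∈ D) (hdD : d' ∈ D)
    (hatt0 : C.Att d0 s) (hatt1 : C.Att e0 t) (hst : s ≠ t) (h01 : C.G.Adj d0 e0)
    (hcd : C.G.Adj c' d') (hcd0 : c' ≠ d0) (hce0 : c' ≠ e0) (hdd0 : d' ≠ d0) (hde0 : d' ≠ e0)
    (π : List V) (hπ : C.DP π) (hπh : π.head? = some d0) (hπl : π.getLast? = some c')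
    (hd'π : d' ∉ π) : False := by
  have hd0S := hDS hd0D; have he0S := hDS he0D; have hcS := hDS hcD; have hdS := hDS hdD
  have hs8 := hatt0.1; have ht8 := hatt1.1
  by_cases he0π : e0 ∈ π
  · obtain ⟨A1, B1, heq⟩ := List.append_of_mem he0π
    obtain ⟨hσDP, hσh, hσl, hdisj⟩ := suffix_facts hπ heq
    have hd0σ : d0 ∉ e0 :: B1 := by
      cases A1 with
      | nil => rw [heq] at hπh; simp at hπh; exact absurd hπh.symm h01.ne
      | cons a0 t0 =>
        apply hdisj
        rw [heq] at hπh; simp at hπh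
        exact List.mem_cons.2 (Or.inl hπh.symm)
    have hd'σ : d' ∉ e0 :: B1 := fun h => hd'π (heq ▸ List.mem_append.2 (Or.inr h))
    have hX : C.DP ((d0 :: e0 :: B1) ++ [d']) := by
      refine DP.concat (z := c') (DP.cons hσDP hσh h01 hd0S hd0σ) ?_ hcd hdS ?_
      · exact getLast?_cons_of_getLast? (by rw [hσl]; exact hπl)
      · intro h; rcases List.mem_cons.1 h with h | h
        · exact hdd0 h
        · exact hd'σ h
    have hA := lemA_head hX rfl hatt0
    have hσ2 : 2 ≤ (e0 :: B1).length :=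
      length_two_of_ne hσh (by rw [hσl]; exact hπl) (Ne.symm hce0)
    simp only [List.length_cons, List.length_append, List.length_singleton] at hA hσ2
    have hs4 : s = 4 := by omega
    have hB1len : B1.length = 1 := by omega
    have heqσ : e0 :: B1 = [e0, c'] := list_eq_pair (by simp [hB1len]) hσh
      (by rw [hσl]; exact hπl)
    have he0c : C.G.Adj e0 c' := by
      have := hσDP.1; rw [heqσ] at this; exact (List.isChain_cons_cons.1 this).1
    exact lemBeta hDS hDcl Hs he0D hd0D hcD hdD h01.symm he0c hcd hatt1
      (hs4 ▸ hatt0) (by omega) hce0 hcd0 hde0 hdd0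
  · have hX : C.DP ((e0 :: π) ++ [d']) := by
      refine DP.concat (z := c') (DP.cons hπ hπh h01.symm he0S he0π) ?_ hcd hdS ?_
      · exact getLast?_cons_of_getLast? hπl
      · intro h; rcases List.mem_cons.1 h with h | h
        · exact hde0 h
        · exact hd'π h
    have hA := lemA_head hX rfl hatt1
    have hπ2 : 2 ≤ π.length := length_two_of_ne hπh hπl (Ne.symm hcd0)
    simp only [List.length_cons, List.length_append, List.length_singleton] at hA hπ2
    have ht4 : t = 4 := by omega
    have hπlen : π.length = 2 := by omega
    have heqπ : π = [d0, c'] := list_eq_pair hπlen hπh hπl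
    have hd0c : C.G.Adj d0 c' := by
      have := hπ.1; rw [heqπ] at this; exact (List.isChain_cons_cons.1 this).1
    exact lemBeta hDS hDcl Hs hd0D he0D hcD hdD h01 hd0c hcd hatt0
      (ht4 ▸ hatt1) (by omega) hcd0 hce0 hdd0 hde0

lemma lemMissBoth
    (hDS : D ⊆ C.S)
    (hDcl : ∀ (L : List V) (c : V), C.DP L → L.head? = some c → c ∈ D → ∀ x ∈ L, x ∈ D)
    (hDconn : ∀ c d, c ∈ D → d ∈ D → ∃ L, C.DP L ∧ L.head? = some c ∧ L.getLast? = some d)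
    (Hs : ∀ x ∈ D, ∀ p q, C.Att x p → C.Att x q → p = q)
    {d0 e0 c d : V} {s t : ℕ}
    (hd0D : d0 ∈ D) (he0D : e0 ∈ D) (hcD : c ∈ D) (hdD : d ∈ D)
    (hatt0 : C.Att d0 s) (hatt1 : C.Att e0 t) (hst : s ≠ t) (h01 : C.G.Adj d0 e0)
    (hcd : C.G.Adj c d) (hcd0 : c ≠ d0) (hce0 : c ≠ e0) (hdd0 : d ≠ d0) (hde0 : d ≠ e0) :
    False := by
  obtain ⟨π0, hπ0, hh0, hl0⟩ := hDconn d0 c hd0D hcD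
  have hex : ∃ x ∈ π0, x = c ∨ x = d := ⟨c, last_mem_of_getLast? hl0, Or.inl rfl⟩
  obtain ⟨L1, m, L2, heq, hm, hL1⟩ := split_first π0 hex
  obtain ⟨hπDP, hπh, hπl⟩ := prefix_facts hπ0 heq
  rw [hh0] at hπh
  rcases hm with rfl | rfl
  · have hdπ : d ∉ L1 ++ [m] := by
      intro hx
      rcases List.mem_append.1 hx with h' | h'
      · exact hL1 d h' (Or.inr rfl)
      · simp at h'; exact hcd.ne h'.symm
    exact lemMissBoth2 hDS hDcl Hs hd0D he0D hcD hdD hatt0 hatt1 hst h01 hcd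
      hcd0 hce0 hdd0 hde0 _ hπDP hπh hπl hdπ
  · have hcπ : c ∉ L1 ++ [m] := by
      intro hx
      rcases List.mem_append.1 hx with h' | h'
      · exact hL1 c h' (Or.inl rfl)
      · simp at h'; exact hcd.ne h'
    exact lemMissBoth2 hDS hDcl Hs hd0D he0D hdD hcD hatt0 hatt1 hst h01 hcd.symm
      hdd0 hde0 hcd0 hce0 _ hπDP hπh hπl hcπ

end Core

section Main

lemma finish' {a x : V} (ha : a ∈ C.S) (hx : x ∈ C.S)
    (hr : (C.G.induce C.S).Reachable ⟨a, ha⟩ ⟨x, hx⟩)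
    (hMAIN : ∀ (cc dd : V) (hcc : cc ∈ C.S), dd ∈ C.S →
      (C.G.induce C.S).Reachable ⟨a, ha⟩ ⟨cc, hcc⟩ → C.G.Adj cc dd → cc = x ∨ dd = x) :
    ∃ (x' : V) (hx' : x' ∈ C.S), (C.G.induce C.S).Reachable ⟨a, ha⟩ ⟨x', hx'⟩ ∧
      (∀ (c : V) (hc : c ∈ C.S), (C.G.induce C.S).Reachable ⟨a, ha⟩ ⟨c, hc⟩ → c ≠ x' →
        (C.G.induce C.S).Adj ⟨x', hx'⟩ ⟨c, hc⟩) ∧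
      (∀ (c d : V) (hc : c ∈ C.S) (hd : d ∈ C.S),
        (C.G.induce C.S).Reachable ⟨a, ha⟩ ⟨c, hc⟩ →
        (C.G.induce C.S).Adj ⟨c, hc⟩ ⟨d, hd⟩ → c = x' ∨ d = x') := by
  refine ⟨x, hx, hr, ?_, ?_⟩
  · intro c hc hrc hcx
    have hrcx : (C.G.induce C.S).Reachable ⟨c, hc⟩ ⟨x, hx⟩ := hrc.symm.trans hr
    obtain ⟨wlk⟩ := hrcx
    obtain ⟨L, hchain, hnodup, hh, hl, hmem⟩ := walk_list wlk
    cases L with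
    | nil => simp at hh
    | cons a0 t =>
      simp at hh
      subst hh
      cases t with
      | nil =>
        simp at hl
        exact absurd hl hcx
      | cons v t' =>
        have hadjcv : C.G.Adj a0 v := (List.isChain_cons_cons.1 hchain).1
        have hvS : v ∈ C.S := hmem v (by simp)
        have := hMAIN a0 v hc hvS hrc hadjcv
        rcases this with h | h
        · exact absurd h hcx
        · subst h
          exact (adj_induce hadjcv).symm
  · intro c d hc hd hrc hadj
    exact hMAIN c d hc hd hrc hadj

lemma main {a : V} (ha : a ∈ C.S) :
    ∃ (x' : V) (hx' : x' ∈ C.S), (C.G.induce C.S).Reachable ⟨a, ha⟩ ⟨x', hx'⟩ ∧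
      (∀ (c : V) (hc : c ∈ C.S), (C.G.induce C.S).Reachable ⟨a, ha⟩ ⟨c, hc⟩ → c ≠ x' →
        (C.G.induce C.S).Adj ⟨x', hx'⟩ ⟨c, hc⟩) ∧
      (∀ (c d : V) (hc : c ∈ C.S) (hd : d ∈ C.S),
        (C.G.induce C.S).Reachable ⟨a, ha⟩ ⟨c, hc⟩ →
        (C.G.induce C.S).Adj ⟨c, hc⟩ ⟨d, hd⟩ → c = x' ∨ d = x') := by
  classical
  set D : Set V := {v | ∃ hv : v ∈ C.S, (C.G.induce C.S).Reachable ⟨a, ha⟩ ⟨v, hv⟩} with hDdef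
  have haD : a ∈ D := ⟨ha, by rfl⟩
  have hDS : D ⊆ C.S := by rintro v ⟨h, _⟩; exact h
  have hDcl : ∀ (L : List V) (c : V), C.DP L → L.head? = some c → c ∈ D → ∀ x ∈ L, x ∈ D := by
    rintro L c hL hh ⟨hcS, hreach⟩ x hx
    obtain ⟨hxS, hr⟩ := DP_reach hL hh hcS x hx
    exact ⟨hxS, hreach.trans hr⟩
  have hDconn : ∀ c d, c ∈ D → d ∈ D →
      ∃ L, C.DP L ∧ L.head? = some c ∧ L.getLast? = some d := by
    rintro c d ⟨hcS, hrc⟩ ⟨hdS, hrd⟩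
    exact reach_toDP hcS hdS (hrc.symm.trans hrd)
  -- attachments at two distinct path indices
  obtain ⟨L1, d1, u1, hL1DP, hL1h, hL1l, hatt1, _, _⟩ :=
    escape0 (C.vf 0) ha (mem_S_ne_vf ha 0)
  have hd1D : d1 ∈ D := hDcl L1 a hL1DP hL1h haD d1 (last_mem_of_getLast? hL1l)
  obtain ⟨L2, d2, u2, hL2DP, hL2h, hL2l, hatt2, _, hvfne⟩ :=
    escape0 (C.vf u1) ha (mem_S_ne_vf ha u1)
  have hd2D : d2 ∈ D := hDcl L2 a hL2DP hL2h haD d2 (last_mem_of_getLast? hL2l)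
  have hu21 : u2 ≠ u1 := fun h => hvfne (h ▸ rfl)
  by_cases hmulti : ∃ z, z ∈ D ∧ ∃ p q, p ≠ q ∧ C.Att z p ∧ C.Att z q
  · obtain ⟨z, hzD, p, q, hpq, hp, hq⟩ := hmulti
    refine finish' ha hzD.1 hzD.2 ?_
    intro cc dd hcc hdd hrcc hadj
    by_contra hcon
    push_neg at hcon
    have hddD : dd ∈ D := ⟨hdd, hrcc.trans (adj_induce hadj).reachable⟩
    exact lemCaseA hDconn hDS hzD ⟨hcc, hrcc⟩ hddD hp hq hpq hadj hcon.1 hcon.2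
  · push_neg at hmulti
    have Hs : ∀ x ∈ D, ∀ p q, C.Att x p → C.Att x q → p = q := by
      intro x hxD p q hp hq
      by_contra hpq
      exact hmulti x hxD p q hpq hp hq
    have hd12 : d1 ≠ d2 := by
      rintro rfl
      exact hmulti d1 hd1D u2 u1 hu21 hatt2 hatt1
    -- d1 and d2 are adjacent
    obtain ⟨L0, hL0DP, hL0h, hL0l⟩ := hDconn d1 d2 hd1D hd2D
    have hlen0 := lemB hL0DP hL0h hL0l hatt1 hatt2 (fun h => hu21 h.symm)
    have h20 : 2 ≤ L0.length := length_two_of_ne hL0h hL0l hd12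
    have hL0len : L0.length = 2 := by omega
    have heqL0 : L0 = [d1, d2] := list_eq_pair hL0len hL0h hL0l
    have h0adj : C.G.Adj d1 d2 := by
      have := hL0DP.1; rw [heqL0] at this; exact (List.isChain_cons_cons.1 this).1
    by_cases hmb : ∃ cc dd, cc ∈ D ∧ dd ∈ D ∧ C.G.Adj cc dd ∧ cc ≠ d1 ∧ cc ≠ d2 ∧
        dd ≠ d1 ∧ dd ≠ d2
    · obtain ⟨cc, dd, hccD, hddD, hadj, h1, h2, h3, h4⟩ := hmb
      exact (lemMissBoth hDS hDcl hDconn Hs hd1D hd2D hccD hddD hatt1 hatt2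
        (fun h => hu21 h.symm) h0adj hadj h1 h2 h3 h4).elim
    · push_neg at hmb
      by_cases hd0 : ∀ cc dd, cc ∈ D → dd ∈ D → C.G.Adj cc dd → cc = d1 ∨ dd = d1
      · refine finish' ha hd1D.1 hd1D.2 ?_
        intro cc dd hcc hdd hrcc hadj
        have hddD : dd ∈ D := ⟨hdd, hrcc.trans (adj_induce hadj).reachable⟩
        exact hd0 cc dd ⟨hcc, hrcc⟩ hddD hadj
      · push_neg at hd0
        obtain ⟨c1, c2, hc1D, hc2D, hadj12, hc1d1, hc2d1⟩ := hd0
        -- the edge (c1, c2) misses d1, so it must contain d2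
        have hy1 : ∃ y1, y1 ∈ D ∧ C.G.Adj d2 y1 ∧ y1 ≠ d1 ∧ y1 ≠ d2 := by
          by_cases h : c1 = d2
          · subst h
            exact ⟨c2, hc2D, hadj12, hc2d1, hadj12.ne'⟩
          · by_cases h' : c2 = d2
            · subst h'
              exact ⟨c1, hc1D, hadj12.symm, hc1d1, hadj12.ne⟩
            · exact absurd (hmb c1 c2 hc1D hc2D hadj12 hc1d1 h hc2d1) h'
        obtain ⟨y1, hy1D, hy1adj, hy1d1, hy1d2⟩ := hy1
        by_cases he0 : ∀ cc dd, cc ∈ D → dd ∈ D → C.G.Adj cc dd → cc = d2 ∨ dd = d2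
        · refine finish' ha hd2D.1 hd2D.2 ?_
          intro cc dd hcc hdd hrcc hadj
          have hddD : dd ∈ D := ⟨hdd, hrcc.trans (adj_induce hadj).reachable⟩
          exact he0 cc dd ⟨hcc, hrcc⟩ hddD hadj
        · push_neg at he0
          obtain ⟨c3, c4, hc3D, hc4D, hadj34, hc3d2, hc4d2⟩ := he0
          have hy2 : ∃ y2, y2 ∈ D ∧ C.G.Adj d1 y2 ∧ y2 ≠ d1 ∧ y2 ≠ d2 := by
            by_cases h : c3 = d1
            · subst h
              exact ⟨c4, hc4D, hadj34, hadj34.ne', hc4d2⟩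
            · by_cases h' : c4 = d1
              · subst h'
                exact ⟨c3, hc3D, hadj34.symm, hadj34.ne, hc3d2⟩
              · exact absurd (hmb c3 c4 hc3D hc4D hadj34 h hc3d2 h') hc4d2
          obtain ⟨y2, hy2D, hy2adj, hy2d1, hy2d2⟩ := hy2
          exfalso
          by_cases hyy : y1 = y2
          · subst hyy
            exact listB3 hy2adj hy1adj.symm h0adj.ne (hDS hd1D) (hDS hy1D) (hDS hd2D)
              hatt1 hatt2 (fun h => hu21 h.symm)
          · by_cases hy1a : ∃ w, C.Att y1 w
            · obtain ⟨w1, hw1⟩ := hy1a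
              have hw1s : w1 = u1 := by
                by_contra hne
                exact listB3 hy1adj.symm h0adj.symm hy1d1 (hDS hy1D) (hDS hd2D) (hDS hd1D)
                  hw1 hatt1 hne
              have hy2t : ∀ w, C.Att y2 w → w = u2 := by
                intro w hw
                by_contra hne
                exact listB3 hy2adj.symm h0adj hy2d2 (hDS hy2D) (hDS hd1D) (hDS hd2D)
                  hw hatt2 hne
              exact lemS4 hDS hd1D hd2D hy2D hy1D h0adj hatt1 hatt2
                (fun h => hu21 h.symm) hy1adj hy2adj hy1d1 hy2d2 (Ne.symm hyy)
                (hw1s ▸ hw1) hy2t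
            · push_neg at hy1a
              by_cases hy2a : ∃ w, C.Att y2 w
              · obtain ⟨w2, hw2⟩ := hy2a
                have hw2t : w2 = u2 := by
                  by_contra hne
                  exact listB3 hy2adj.symm h0adj hy2d2 (hDS hy2D) (hDS hd1D) (hDS hd2D)
                    hw2 hatt2 hne
                have hy1s : ∀ w, C.Att y1 w → w = u1 := fun w hw => absurd hw (hy1a w)
                exact lemS4 hDS hd2D hd1D hy1D hy2D h0adj.symm hatt2 hatt1 hu21
                  hy2adj hy1adj hy2d2 hy1d1 hyy (hw2t ▸ hw2) hy1s
              · push_neg at hy2a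
                exact lemS5 hDS hd1D hd2D hy2D hy1D h0adj hatt1 hatt2
                  (fun h => hu21 h.symm) hy1adj hy2adj hy1d1 hy2d2 (Ne.symm hyy) hy2a hy1a

end Main

end Stmt12Aux

/-- In a 2-connected `P₁₀`-subgraph-free graph with a longest path
`P = (v_1, …, v_9)`, every component `D` of `G − V(P)` with at least 2 vertices induces
a star: some vertex `x` of `D` is adjacent to all other vertices of `D`, and every edge
inside `D` is incident to `x`. -/
theorem stmt12 {V : Type*} (G : SimpleGraph V) (h2c : TwoConnected G)
    (hfree : ¬ ContainsPathOn G 10) (f : Fin 9 → V) (hP : IsPathEmb G 9 f)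
    (S : Set V) (hS : S = (Set.range f)ᶜ)
    (a b : S) (hab : (G.induce S).Reachable a b) (hne : a ≠ b) :
    ∃ x : S, (G.induce S).Reachable a x ∧
      (∀ c : S, (G.induce S).Reachable a c → c ≠ x → (G.induce S).Adj x c) ∧
      (∀ c d : S, (G.induce S).Reachable a c → (G.induce S).Adj c d →
        c = x ∨ d = x) := by
  have hnolong : ∀ L : List V, L.Chain' G.Adj → L.Nodup → L.length ≤ 9 := by
    intro L hc hn
    by_contra h
    push_neg at h
    apply hfree
    refine ⟨fun i => L.get ⟨i.1, by omega⟩, ?_, ?_⟩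
    · intro i j hij
      have h2 := congrArg Fin.val ((List.nodup_iff_injective_get.1 hn) hij)
      exact Fin.ext h2
    · intro i hi
      exact List.isChain_iff_getElem.1 hc i (by omega)
  set C : Stmt12Aux.Ctx V :=
    { G := G, f := f, finj := hP.1,
      fadj := fun i h => hP.2 i (by omega),
      nolong := hnolong,
      conn2 := h2c.2.2 } with hC
  subst hS
  obtain ⟨x, hx, hr, hbul2, hbul3⟩ := Stmt12Aux.main (C := C) (a := a.1) a.2
  refine ⟨⟨x, hx⟩, hr, ?_, ?_⟩
  · intro c hrc hcx
    exact hbul2 c.1 c.2 hrc (fun h => hcx (Subtype.ext h))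
  · intro c d hrc hadj
    rcases hbul3 c.1 d.1 c.2 d.2 hrc hadj with h | h
    · exact Or.inl (Subtype.ext h)
    · exact Or.inr (Subtype.ext h)
end

section
/- Let G be a 2-connected graph that contains no subgraph isomorphic to the subdivided claw S_{1,3,6}, and suppose the longest path of G has exactly r ≥ 12 vertices. Then V(G) = V(P) for any longest path P of G, i.e., G has exactly r vertices. -/
section Aux
variable {V : Type*} {G : SimpleGraph V} {r : ℕ} {f : Fin r → V}

lemma aux_fc (f : Fin r → V) {a b : ℕ} {ha : a < r} {hb : b < r} (h : a = b) :
    f ⟨a, ha⟩ = f ⟨b, hb⟩ := by subst h; rfl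

lemma aux_rev (hP : IsPathEmb G r f) :
    IsPathEmb G r (fun j : Fin r => f ⟨r - 1 - (j : ℕ), by have := j.isLt; omega⟩) := by
  constructor
  · intro a b hab
    have h1 := hP.1 hab
    have h2 : r - 1 - (a : ℕ) = r - 1 - (b : ℕ) := by simpa [Fin.ext_iff] using h1
    have := a.isLt; have := b.isLt
    exact Fin.ext (by omega)
  · intro i hi
    simp only [Fin.val_mk]
    have e1 : r - 1 - (i + 1) = r - 2 - i := by omega
    have e2 : r - 1 - i = (r - 2 - i) + 1 := by omega
    simp only [e1, e2]
    exact (hP.2 (r - 2 - i) (by omega)).symm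

lemma aux_rev_range :
    Set.range (fun j : Fin r => f ⟨r - 1 - (j : ℕ), by have := j.isLt; omega⟩) = Set.range f := by
  ext x
  constructor
  · rintro ⟨j, rfl⟩; exact ⟨_, rfl⟩
  · rintro ⟨j, rfl⟩
    have := j.isLt
    refine ⟨⟨r - 1 - (j : ℕ), by omega⟩, ?_⟩
    simp only [Fin.val_mk]
    congr 1
    exact Fin.ext (by simp only [Fin.val_mk]; omega)

lemma aux_extend_head (hr : 1 ≤ r) {w : V} (hw : w ∉ Set.range f)
    (hP : IsPathEmb G r f) (hadj : G.Adj w (f ⟨0, hr⟩)) : ContainsPathOn G (r + 1) := by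
  refine ⟨fun j : Fin (r+1) => if h : (j : ℕ) = 0 then w else f ⟨(j : ℕ) - 1, by have := j.isLt; omega⟩,
    ?_, ?_⟩
  · intro a b hab
    simp only at hab
    split_ifs at hab with h1 h2 h2
    · exact Fin.ext (by omega)
    · exact absurd hab (fun he => hw ⟨_, he.symm⟩)
    · exact absurd hab (fun he => hw ⟨_, he⟩)
    · have h3 := hP.1 hab
      have := a.isLt; have := b.isLt
      simp only [Fin.mk.injEq] at h3
      simp only [Fin.ext_iff]
      omega
  · intro i hi
    simp only [Fin.val_mk]
    rcases Nat.eq_zero_or_pos i with h0 | h0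
    · subst h0
      rw [dif_pos rfl, dif_neg (by omega)]
      convert hadj using 2
    · rw [dif_neg (by omega), dif_neg (by omega)]
      have e : i + 1 - 1 = (i - 1) + 1 := by omega
      simp only [e]
      exact hP.2 (i - 1) (by omega)

lemma aux_chain {S : Set V} {u x : V} (W : G.Walk u x) (hW : W.IsPath) (hu : u ∉ S) (hx : x ∈ S) :
    ∃ (c : V) (k : ℕ) (q : ℕ → V), c ∈ S ∧ 1 ≤ k ∧ q 0 = u ∧
      (∀ m, m < k → q m ∉ S) ∧
      (∀ m n, m < k → n < k → q m = q n → m = n) ∧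
      (∀ m, m + 1 < k → G.Adj (q m) (q (m + 1))) ∧
      G.Adj (q (k - 1)) c ∧
      (∀ m, m < k → q m ∈ W.support) ∧ c ∈ W.support := by
  induction W with
  | nil => exact absurd hx hu
  | @cons u b x h W ih =>
    rw [SimpleGraph.Walk.cons_isPath_iff] at hW
    by_cases hb : b ∈ S
    · refine ⟨b, 1, fun _ => u, hb, le_refl _, rfl, ?_, ?_, ?_, h, ?_, ?_⟩
      · intro m _; exact hu
      · intro m n hm hn _; omega
      · intro m hm; omega
      · intro m _; simp [SimpleGraph.Walk.support_cons]
      · simp [SimpleGraph.Walk.support_cons, W.start_mem_support]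
    · obtain ⟨c, k, q, hcS, hk, hq0, hoff, hinj, hadjc, hlast, hsupp, hcsupp⟩ := ih hW.1 hb hx
      refine ⟨c, k + 1, fun m => if m = 0 then u else q (m - 1), hcS, by omega, rfl, ?_, ?_, ?_, ?_, ?_, ?_⟩
      · intro m hm
        by_cases h0 : m = 0
        · simpa [h0] using hu
        · simpa [h0] using hoff (m - 1) (by omega)
      · intro m n hm hn he
        by_cases h0 : m = 0 <;> by_cases h1 : n = 0 <;> simp [h0, h1] at he ⊢
        · exact absurd (hsupp (n - 1) (by omega)) (by rw [← he]; exact hW.2)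
        · exact absurd (hsupp (m - 1) (by omega)) (by rw [he]; exact hW.2)
        · have := hinj (m - 1) (n - 1) (by omega) (by omega) he; omega
      · intro m hm
        by_cases h0 : m = 0
        · subst h0; simpa [hq0] using h
        · have e : m + 1 - 1 = (m - 1) + 1 := by omega
          simp only [if_neg h0, if_neg (by omega : ¬ m + 1 = 0), e]
          exact hadjc (m - 1) (by omega)
      · simp only [show k + 1 - 1 = k from by omega, if_neg (show ¬ k = 0 by omega)]
        exact hlast
      · intro m hm
        by_cases h0 : m = 0
        · simp [h0, SimpleGraph.Walk.support_cons]
        · simp only [if_neg h0, SimpleGraph.Walk.support_cons, List.mem_cons]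
          exact Or.inr (hsupp (m - 1) (by omega))
      · simp [SimpleGraph.Walk.support_cons, hcsupp]

lemma aux_fwd (hP : IsPathEmb G r f) (a len : ℕ) (h : a + len < r) :
    IsPathEmb G (len + 1) (fun m : Fin (len + 1) => f ⟨a + (m : ℕ), by have := m.isLt; omega⟩) := by
  constructor
  · intro m n hmn
    have h1 := hP.1 hmn
    simp only [Fin.mk.injEq] at h1
    exact Fin.ext (by omega)
  · intro i hi
    simp only [Fin.val_mk]
    have e : a + (i + 1) = (a + i) + 1 := by omega
    simp only [e]
    exact hP.2 (a + i) (by omega)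

lemma aux_bwd (hP : IsPathEmb G r f) (a len : ℕ) (hl : len ≤ a) (ha : a < r) :
    IsPathEmb G (len + 1) (fun m : Fin (len + 1) => f ⟨a - (m : ℕ), by omega⟩) := by
  constructor
  · intro m n hmn
    have h1 := hP.1 hmn
    simp only [Fin.mk.injEq] at h1
    have := m.isLt; have := n.isLt
    exact Fin.ext (by omega)
  · intro i hi
    simp only [Fin.val_mk]
    have e : a - i = (a - (i + 1)) + 1 := by omega
    simp only [e]
    exact (hP.2 (a - (i + 1)) (by omega)).symm

lemma aux_midclaw (hr : 12 ≤ r) (hP : IsPathEmb G r f) {w : V} (hw : w ∉ Set.range f)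
    {t : ℕ} (h3 : 3 ≤ t) (h7 : t ≤ r - 7) (hadj : G.Adj w (f ⟨t, by omega⟩)) :
    ContainsSubdividedClaw G 1 3 6 := by
  refine ⟨fun m : Fin 2 => if (m : ℕ) = 0 then f ⟨t, by omega⟩ else w,
    fun m : Fin 4 => f ⟨t - (m : ℕ), by omega⟩,
    fun m : Fin 7 => f ⟨t + (m : ℕ), by have := m.isLt; omega⟩,
    rfl, rfl, ?_, aux_bwd hP t 3 (by omega) (by omega), aux_fwd hP t 6 (by omega), ?_, ?_, ?_⟩
  · constructor
    · intro a b hab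
      simp only at hab
      split_ifs at hab with ha hb hb
      · exact Fin.ext (by omega)
      · exact absurd hab (fun he => hw ⟨_, he⟩)
      · exact absurd hab (fun he => hw ⟨_, he.symm⟩)
      · have := a.isLt; have := b.isLt; exact Fin.ext (by omega)
    · intro i hi
      have hi0 : i = 0 := by omega
      subst hi0
      simp only [Fin.val_mk, if_pos rfl, if_neg (by omega : ¬ (1 : ℕ) = 0)]
      exact hadj.symm
  · intro i j hij
    simp only at hij
    by_cases hi0 : (i : ℕ) = 0
    · rw [if_pos hi0] at hij
      have := hP.1 hij
      simp only [Fin.mk.injEq] at this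
      have := j.isLt
      exact ⟨Fin.ext (by simpa using hi0), Fin.ext (by simp; omega)⟩
    · rw [if_neg hi0] at hij
      exact absurd hij (fun he => hw ⟨_, he.symm⟩)
  · intro i j hij
    simp only at hij
    by_cases hi0 : (i : ℕ) = 0
    · rw [if_pos hi0] at hij
      have := hP.1 hij
      simp only [Fin.mk.injEq] at this
      have := j.isLt
      exact ⟨Fin.ext (by simpa using hi0), Fin.ext (by simp; omega)⟩
    · rw [if_neg hi0] at hij
      exact absurd hij (fun he => hw ⟨_, he.symm⟩)
  · intro i j hij
    have := hP.1 hij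
    simp only [Fin.mk.injEq] at this
    have := i.isLt; have := j.isLt
    constructor <;> [exact Fin.ext (by simp; omega); exact Fin.ext (by simp; omega)]

lemma aux_pos (hr : 12 ≤ r) (hP : IsPathEmb G r f)
    (hfree : ¬ ContainsSubdividedClaw G 1 3 6) (hlong : ¬ ContainsPathOn G (r + 1))
    {w : V} (hw : w ∉ Set.range f) {t : ℕ} (ht : t < r)
    (hadj : G.Adj w (f ⟨t, ht⟩)) : t = 1 ∨ t = 2 ∨ t = r - 3 ∨ t = r - 2 := by
  by_contra hcon
  push_neg at hcon
  obtain ⟨hc1, hc2, hc3, hc4⟩ := hcon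
  by_cases ht0 : t = 0
  · subst ht0
    exact hlong (aux_extend_head (by omega) hw hP hadj)
  by_cases htr : t = r - 1
  · refine hlong (aux_extend_head (r := r)
      (f := fun j : Fin r => f ⟨r - 1 - (j : ℕ), by have := j.isLt; omega⟩)
      (by omega) (by rw [aux_rev_range]; exact hw) (aux_rev hP) ?_)
    simpa [htr] using hadj
  by_cases h7 : t ≤ r - 7
  · exact hfree (aux_midclaw hr hP hw (by omega) h7 (by exact hadj))
  · refine hfree (aux_midclaw (r := r)
      (f := fun j : Fin r => f ⟨r - 1 - (j : ℕ), by have := j.isLt; omega⟩)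
      hr (aux_rev hP) (by rw [aux_rev_range]; exact hw) (t := r - 1 - t)
      (by omega) (by omega) ?_)
    have e : (⟨r - 1 - ((⟨r - 1 - t, by omega⟩ : Fin r) : ℕ), by omega⟩ : Fin r) = ⟨t, ht⟩ :=
      Fin.ext (by simp; omega)
    simpa [e] using hadj

lemma aux_bridge (hr : 12 ≤ r) (hP : IsPathEmb G r f) (k : ℕ) (hk : 1 ≤ k) (q : ℕ → V)
    (hoff : ∀ m, m < k → q m ∉ Set.range f)
    (hinj : ∀ m n, m < k → n < k → q m = q n → m = n)
    (hadjc : ∀ m, m + 1 < k → G.Adj (q m) (q (m + 1)))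
    (h1 : G.Adj (f ⟨1, by omega⟩) (q 0))
    (h2 : G.Adj (q (k - 1)) (f ⟨2, by omega⟩)) : ContainsPathOn G (r + 1) := by
  have fc : ∀ {a b : ℕ} {ha : a < r} {hb : b < r}, a = b → f ⟨a, ha⟩ = f ⟨b, hb⟩ :=
    fun h => by subst h; rfl
  refine ⟨fun j : Fin (r + 1) =>
    if h : (j : ℕ) < 2 then f ⟨(j : ℕ), by omega⟩
    else if h' : (j : ℕ) < 2 + k then q ((j : ℕ) - 2)
    else f ⟨(j : ℕ) - k, by have := j.isLt; omega⟩, ?_, ?_⟩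
  · intro a b hab
    simp only at hab
    split_ifs at hab with hA hB hB hC hC hD hD hE
    · have := hP.1 hab; simp only [Fin.mk.injEq] at this; exact Fin.ext this
    · exact absurd hab (fun he => hoff ((b : ℕ) - 2) (by omega) ⟨_, he⟩)
    · have := hP.1 hab; simp only [Fin.mk.injEq] at this; exact Fin.ext (by omega)
    · exact absurd hab (fun he => hoff ((a : ℕ) - 2) (by omega) ⟨_, he.symm⟩)
    · have := hinj _ _ (by omega) (by omega) hab; exact Fin.ext (by omega)
    · exact absurd hab (fun he => hoff ((a : ℕ) - 2) (by omega) ⟨_, he.symm⟩)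
    · have := hP.1 hab; simp only [Fin.mk.injEq] at this; exact Fin.ext (by omega)
    · exact absurd hab (fun he => hoff ((b : ℕ) - 2) (by omega) ⟨_, he⟩)
    · have := hP.1 hab; simp only [Fin.mk.injEq] at this; exact Fin.ext (by omega)
  · intro i hi
    simp only [Fin.val_mk]
    by_cases hA : i = 0
    · subst hA
      rw [dif_pos (by omega), dif_pos (by omega)]
      exact hP.2 0 (by omega)
    by_cases hB : i = 1
    · subst hB
      rw [dif_pos (by omega), dif_neg (by omega), dif_pos (by omega)]
      exact h1
    by_cases hC : i + 1 < 2 + k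
    · rw [dif_neg (by omega), dif_pos (by omega), dif_neg (by omega), dif_pos (by omega)]
      have e : i + 1 - 2 = (i - 2) + 1 := by omega
      rw [e]
      exact hadjc (i - 2) (by omega)
    by_cases hD : i + 1 = 2 + k
    · rw [dif_neg (by omega), dif_pos (by omega), dif_neg (by omega), dif_neg (by omega)]
      rw [congrArg q (show i - 2 = k - 1 by omega),
        fc (a := i + 1 - k) (b := 2) (ha := by omega) (hb := by omega) (by omega)]
      exact h2
    · rw [dif_neg (by omega), dif_neg (by omega), dif_neg (by omega), dif_neg (by omega)]
      rw [fc (a := i + 1 - k) (b := i - k + 1) (ha := by omega) (hb := by omega) (by omega)]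
      exact hP.2 (i - k) (by omega)

lemma aux_chainclaw (hr : 12 ≤ r) (hP : IsPathEmb G r f)
    {i t : ℕ} (hi1 : 1 ≤ i) (hi2 : i ≤ 2) (ht1 : r - 3 ≤ t) (ht2 : t ≤ r - 2)
    (k : ℕ) (hk : 1 ≤ k) (q : ℕ → V)
    (hoff : ∀ m, m < k → q m ∉ Set.range f)
    (hinj : ∀ m n, m < k → n < k → q m = q n → m = n)
    (hadjc : ∀ m, m + 1 < k → G.Adj (q m) (q (m + 1)))
    (h1 : G.Adj (f ⟨i, by omega⟩) (q 0))
    (h2 : G.Adj (q (k - 1)) (f ⟨t, by omega⟩)) : ContainsSubdividedClaw G 1 3 6 := by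
  have fc : ∀ {a b : ℕ} {ha : a < r} {hb : b < r}, a = b → f ⟨a, ha⟩ = f ⟨b, hb⟩ :=
    fun h => by subst h; rfl
  have fin0 : ∀ {n : ℕ} (a : Fin (n + 1)), (a : ℕ) = 0 → a = 0 := fun a h => Fin.ext (by simpa using h)
  refine ⟨fun m : Fin 2 => if (m : ℕ) = 0 then f ⟨i, by omega⟩ else f ⟨i - 1, by omega⟩,
    fun m : Fin 4 => if (m : ℕ) = 0 then f ⟨i, by omega⟩
      else if (m : ℕ) ≤ k then q ((m : ℕ) - 1)
      else f ⟨t + ((m : ℕ) - k - 1), by have := m.isLt; omega⟩,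
    fun m : Fin 7 => f ⟨i + (m : ℕ), by have := m.isLt; omega⟩,
    by norm_num, by norm_num, ?_, ?_, aux_fwd hP i 6 (by omega), ?_, ?_, ?_⟩
  · constructor
    · intro a b hab
      simp only at hab
      split_ifs at hab with hA hB hB
      · exact Fin.ext (by omega)
      · have := hP.1 hab; simp only [Fin.mk.injEq] at this; exact Fin.ext (by omega)
      · have := hP.1 hab; simp only [Fin.mk.injEq] at this; exact Fin.ext (by omega)
      · have := a.isLt; have := b.isLt; exact Fin.ext (by omega)
    · intro m hm
      have hm0 : m = 0 := by omega
      subst hm0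
      simp only [Fin.val_mk, if_pos rfl, if_neg (by omega : ¬(1 : ℕ) = 0)]
      rw [fc (a := i) (b := i - 1 + 1) (ha := by omega) (hb := by omega) (by omega)]
      exact (hP.2 (i - 1) (by omega)).symm
  · constructor
    · intro a b hab
      simp only at hab
      split_ifs at hab with hA hB hB hC hC hD hD hE
      · exact Fin.ext (by omega)
      · exact absurd hab (fun he => hoff ((b : ℕ) - 1) (by omega) ⟨_, he⟩)
      · have := hP.1 hab; simp only [Fin.mk.injEq] at this; exact Fin.ext (by omega)
      · exact absurd hab (fun he => hoff ((a : ℕ) - 1) (by omega) ⟨_, he.symm⟩)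
      · have := hinj _ _ (by omega) (by omega) hab; exact Fin.ext (by omega)
      · exact absurd hab (fun he => hoff ((a : ℕ) - 1) (by omega) ⟨_, he.symm⟩)
      · have := hP.1 hab; simp only [Fin.mk.injEq] at this; exact Fin.ext (by omega)
      · exact absurd hab (fun he => hoff ((b : ℕ) - 1) (by omega) ⟨_, he⟩)
      · have := hP.1 hab; simp only [Fin.mk.injEq] at this
        have := a.isLt; have := b.isLt; exact Fin.ext (by omega)
    · intro m hm
      simp only [Fin.val_mk]
      by_cases hA : m = 0
      · subst hA
        rw [if_pos rfl, if_neg (by omega), if_pos (by omega)]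
        exact h1
      by_cases hB : m + 1 ≤ k
      · rw [if_neg (by omega), if_pos (by omega), if_neg (by omega), if_pos (by omega)]
        have e : m + 1 - 1 = (m - 1) + 1 := by omega
        rw [e]
        exact hadjc (m - 1) (by omega)
      by_cases hC : m = k
      · rw [if_neg (by omega), if_pos (by omega), if_neg (by omega), if_neg (by omega)]
        rw [congrArg q (show m - 1 = k - 1 by omega),
          fc (a := t + (m + 1 - k - 1)) (b := t) (ha := by omega) (hb := by omega) (by omega)]
        exact h2
      · rw [if_neg (by omega), if_neg (by omega), if_neg (by omega), if_neg (by omega)]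
        rw [fc (a := t + (m + 1 - k - 1)) (b := t + (m - k - 1) + 1) (ha := by omega)
          (hb := by omega) (by omega)]
        exact hP.2 (t + (m - k - 1)) (by omega)
  · intro a b hab
    simp only at hab
    split_ifs at hab with hA hB hB hC hC
    · exact ⟨fin0 a hA, fin0 b hB⟩
    · exact absurd hab (fun he => hoff ((b : ℕ) - 1) (by omega) ⟨_, he⟩)
    · have := hP.1 hab; simp only [Fin.mk.injEq] at this; omega
    · have := hP.1 hab; simp only [Fin.mk.injEq] at this; omega
    · exact absurd hab (fun he => hoff ((b : ℕ) - 1) (by omega) ⟨_, he⟩)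
    · have := hP.1 hab; simp only [Fin.mk.injEq] at this; omega
  · intro a b hab
    simp only at hab
    split_ifs at hab with hA
    · have := hP.1 hab; simp only [Fin.mk.injEq] at this
      exact ⟨fin0 a hA, fin0 b (by omega)⟩
    · have := hP.1 hab; simp only [Fin.mk.injEq] at this
      have := b.isLt; omega
  · intro a b hab
    simp only at hab
    split_ifs at hab with hA hB hB
    · have := hP.1 hab; simp only [Fin.mk.injEq] at this
      exact ⟨fin0 a hA, fin0 b (by omega)⟩
    · exact absurd hab (fun he => hoff ((a : ℕ) - 1) (by omega) ⟨_, he.symm⟩)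
    · have := hP.1 hab; simp only [Fin.mk.injEq] at this
      have := b.isLt; omega

lemma aux_main (hr : 12 ≤ r) (hP : IsPathEmb G r f)
    (hfree : ¬ ContainsSubdividedClaw G 1 3 6) (hlong : ¬ ContainsPathOn G (r + 1))
    (hcut : ∀ v : V, (G.induce {u : V | u ≠ v}).Connected)
    {u : V} (hu : u ∉ Set.range f) {i : ℕ} (hi1 : 1 ≤ i) (hi2 : i ≤ 2)
    (hadj : G.Adj u (f ⟨i, by omega⟩)) : False := by
  classical
  set s : Set V := {x : V | x ≠ f ⟨i, by omega⟩} with hs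
  have hus : u ∈ s := fun he => hu (he ▸ ⟨_, rfl⟩)
  have h0s : f ⟨0, by omega⟩ ∈ s := by
    intro he
    have := hP.1 he
    simp only [Fin.mk.injEq] at this
    omega
  obtain ⟨W0⟩ := (hcut (f ⟨i, by omega⟩)).preconnected ⟨u, hus⟩ ⟨f ⟨0, by omega⟩, h0s⟩
  let W1 : G.Walk u (f ⟨0, by omega⟩) := W0.map (SimpleGraph.Embedding.induce s).toHom
  have havoid : ∀ y ∈ W1.support, y ≠ f ⟨i, by omega⟩ := by
    intro y hy
    rw [show W1.support = _ from SimpleGraph.Walk.support_map _ _] at hy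
    obtain ⟨z, _, rfl⟩ := List.mem_map.mp hy
    exact z.2
  obtain ⟨c, k, q, hcS, hk, hq0, hoff, hinj, hadjc, hlast, hsupp, hcsupp⟩ :=
    aux_chain (W1.toPath.1 : G.Walk u _) W1.toPath.2 hu ⟨_, rfl⟩
  obtain ⟨j, hj⟩ := hcS
  obtain ⟨t, ht, hjt⟩ : ∃ (t : ℕ) (ht : t < r), f ⟨t, ht⟩ = c :=
    ⟨(j : ℕ), j.isLt, by rw [Fin.eta]; exact hj⟩
  have hcne : c ≠ f ⟨i, by omega⟩ :=
    havoid c (SimpleGraph.Walk.support_toPath_subset W1 hcsupp)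
  have hti : t ≠ i := fun he => hcne (hjt ▸ (aux_fc f he))
  have hadj2 : G.Adj (q (k - 1)) (f ⟨t, ht⟩) := hjt ▸ hlast
  have htpos := aux_pos hr hP hfree hlong (hoff (k - 1) (by omega)) ht hadj2
  by_cases ht2 : t ≤ 2
  · -- bridge case
    rcases (by omega : i = 1 ∧ t = 2 ∨ i = 2 ∧ t = 1) with ⟨hi', ht'⟩ | ⟨hi', ht'⟩
    · subst hi'; subst ht'
      exact hlong (aux_bridge hr hP k hk q hoff hinj hadjc
        (by rw [hq0]; exact hadj.symm) hadj2)
    · subst hi'; subst ht'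
      refine hlong (aux_bridge hr hP k hk (fun m => q (k - 1 - m))
        (fun m hm => hoff (k - 1 - m) (by omega))
        (fun m n hm hn he => by have := hinj _ _ (by omega) (by omega) he; omega)
        (fun m hm => ?_) (by simpa using hadj2.symm) ?_)
      · have h3 := (hadjc (k - 1 - (m + 1)) (by omega)).symm
        rw [congrArg q (show k - 1 - (m + 1) + 1 = k - 1 - m by omega)] at h3
        exact h3
      · show G.Adj (q (k - 1 - (k - 1))) (f ⟨2, by omega⟩)
        rw [congrArg q (show k - 1 - (k - 1) = 0 by omega), hq0]
        exact hadj
  · -- claw case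
    have ht3 : r - 3 ≤ t ∧ t ≤ r - 2 := by rcases htpos with h | h | h | h <;> omega
    exact hfree (aux_chainclaw hr hP hi1 hi2 ht3.1 ht3.2 k hk q hoff hinj hadjc
      (by rw [hq0]; exact hadj.symm) hadj2)

end Aux

/-- If `G` is 2-connected and `S_{1,3,6}`-subgraph-free, and a longest path of `G` has
exactly `r ≥ 12` vertices, then every vertex of `G` lies on the path. -/
theorem stmt13 {V : Type*} (G : SimpleGraph V) (h2c : TwoConnected G)
    (hfree : ¬ ContainsSubdividedClaw G 1 3 6)
    (r : ℕ) (hr : 12 ≤ r) (f : Fin r → V) (hP : IsPathEmb G r f)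
    (hlong : ¬ ContainsPathOn G (r + 1)) :
    ∀ v : V, v ∈ Set.range f := by
  classical
  intro v
  by_contra hv
  obtain ⟨W⟩ := h2c.2.1.preconnected v (f ⟨0, by omega⟩)
  obtain ⟨c, k, q, hcS, hk, hq0, hoff, hinj, hadjc, hlast, hsupp, hcsupp⟩ :=
    aux_chain (W.toPath.1 : G.Walk v _) W.toPath.2 hv ⟨_, rfl⟩
  obtain ⟨j, hj⟩ := hcS
  obtain ⟨t, ht, hjt⟩ : ∃ (t : ℕ) (ht : t < r), f ⟨t, ht⟩ = c :=
    ⟨(j : ℕ), j.isLt, by rw [Fin.eta]; exact hj⟩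
  have hadj2 : G.Adj (q (k - 1)) (f ⟨t, ht⟩) := hjt ▸ hlast
  have huoff := hoff (k - 1) (by omega)
  have htpos := aux_pos hr hP hfree hlong huoff ht hadj2
  by_cases ht2 : t ≤ 2
  · exact aux_main hr hP hfree hlong h2c.2.2 huoff (i := t) (by omega) ht2 hadj2
  · have ht3 : r - 3 ≤ t ∧ t ≤ r - 2 := by rcases htpos with h | h | h | h <;> omega
    refine aux_main hr (aux_rev hP) hfree hlong h2c.2.2
      (by rw [aux_rev_range]; exact huoff) (i := r - 1 - t) (by omega) (by omega) ?_
    show G.Adj (q (k - 1)) (f ⟨r - 1 - (r - 1 - t), by omega⟩)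
    rw [aux_fc f (show r - 1 - (r - 1 - t) = t by omega)]
    exact hadj2
end
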